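/- arXiv:1901.09772 — 7 statements merged into one kernel-verified Lean document; each statement's English description precedes it below -/
import Mathlib

section
/- Let Ω be a Hermitian operator on a finite-dimensional Hilbert space with largest eigenvalue 1 attained on the unit vector Ψ, and let β(Ω) be its second largest eigenvalue. Then the maximum of tr(Ωσ) over all density operators σ with ⟨Ψ|σ|Ψ⟩ ≤ 1−ε equals 1 − (1−β(Ω))·ε, for 0 ≤ ε ≤ 1. -/
open Matrix
open scoped ComplexOrder

namespace Stmt0Aux

variable {n : ℕ}

lemma vecMulVec_mulVec (w v y : Fin n → ℂ) :
    vecMulVec w v *ᵥ y = (v ⬝ᵥ y) • w := by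
  ext i
  simp [vecMulVec_apply, mulVec, dotProduct, Finset.mul_sum, mul_assoc, mul_comm, mul_left_comm]

lemma trace_mul_vecMulVec (M : Matrix (Fin n) (Fin n) ℂ) (w v : Fin n → ℂ) :
    (M * vecMulVec w v).trace = v ⬝ᵥ (M *ᵥ w) := by
  simp only [trace, diag, mul_apply, vecMulVec_apply, dotProduct, mulVec, Finset.mul_sum]
  refine Finset.sum_congr rfl fun i _ => Finset.sum_congr rfl fun j _ => by ring

lemma trace_vecMulVec (w v : Fin n → ℂ) : (vecMulVec w v).trace = v ⬝ᵥ w := by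
  simp [trace, diag, vecMulVec_apply, dotProduct, mul_comm]

lemma posSemidef_outer (v : Fin n → ℂ) : (vecMulVec v (star v)).PosSemidef := by
  apply PosSemidef.of_dotProduct_mulVec_nonneg
  · ext i j
    simp [conjTranspose_apply, vecMulVec_apply, mul_comm]
  · intro x
    rw [vecMulVec_mulVec, dotProduct_smul, smul_eq_mul, star_dotProduct (v := x)]
    exact mul_star_self_nonneg _

lemma posSemidef_real_smul {M : Matrix (Fin n) (Fin n) ℂ} (hM : M.PosSemidef)
    {c : ℝ} (hc : 0 ≤ c) : ((c : ℂ) • M).PosSemidef := by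
  apply PosSemidef.of_dotProduct_mulVec_nonneg
  · have h1 := hM.1
    unfold IsHermitian at h1 ⊢
    rw [conjTranspose_smul, h1]
    simp
  · intro x
    rw [smul_mulVec, dotProduct_smul, smul_eq_mul]
    exact mul_nonneg (by exact_mod_cast hc) (hM.dotProduct_mulVec_nonneg x)

lemma trace_nonneg_of_posSemidef {M : Matrix (Fin n) (Fin n) ℂ} (hM : M.PosSemidef) :
    0 ≤ M.trace := by
  refine Finset.sum_nonneg fun i _ => ?_
  have := hM.dotProduct_mulVec_nonneg (Pi.single i 1)
  simpa [dotProduct, Pi.single_apply] using this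

lemma trace_mul_nonneg {A σ : Matrix (Fin n) (Fin n) ℂ} (hA : A.PosSemidef)
    (hσ : σ.PosSemidef) : 0 ≤ (A * σ).trace := by
  obtain ⟨B, rfl⟩ : ∃ B : Matrix (Fin n) (Fin n) ℂ, σ = Bᴴ * B := by
    open scoped MatrixOrder Matrix.Norms.L2Operator in
    exact CStarAlgebra.nonneg_iff_eq_star_mul_self.mp hσ.nonneg
  rw [← mul_assoc, trace_mul_cycle]
  exact trace_nonneg_of_posSemidef (hA.mul_mul_conjTranspose_same B)


lemma rayleigh_bound {Ω : Matrix (Fin n) (Fin n) ℂ} (hΩpos : Ω.PosSemidef)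
    {Ψ : Fin n → ℂ} {β : ℝ}
    (hβub : ∀ x : Fin n → ℂ, star x ⬝ᵥ x = 1 → star Ψ ⬝ᵥ x = 0 →
        (star x ⬝ᵥ (Ω *ᵥ x)).re ≤ β)
    (z : Fin n → ℂ) (hz : star Ψ ⬝ᵥ z = 0) :
    (star z ⬝ᵥ (Ω *ᵥ z)).re ≤ β * (star z ⬝ᵥ z).re := by
  by_cases h0 : z = 0
  · simp [h0]
  · have hs0 : 0 ≤ star z ⬝ᵥ z := dotProduct_star_self_nonneg z
    have him : (star z ⬝ᵥ z).im = 0 := (Complex.le_def.mp hs0).2.symm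
    have hsre : 0 ≤ (star z ⬝ᵥ z).re := by simpa using (Complex.le_def.mp hs0).1
    set s := (star z ⬝ᵥ z).re with hs
    have hsne : star z ⬝ᵥ z ≠ 0 := fun h => h0 (dotProduct_star_self_eq_zero.mp h)
    have hszz : star z ⬝ᵥ z = (s : ℂ) := by
      apply Complex.ext <;> simp [him, hs]
    have hspos : 0 < s := by
      rcases lt_or_eq_of_le hsre with h | h
      · exact h
      · exact absurd (by rw [hszz, ← h]; simp) hsne
    set c : ℝ := (Real.sqrt s)⁻¹ with hc
    have hcsq : c ^ 2 = s⁻¹ := by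
      rw [hc, ← Real.sqrt_inv, Real.sq_sqrt (inv_nonneg.mpr hspos.le)]
    set u : Fin n → ℂ := (c : ℂ) • z with hu
    have hstaru : star u = (c : ℂ) • star z := by
      rw [hu, star_smul]; norm_num
    have huu : star u ⬝ᵥ u = 1 := by
      rw [hu, hstaru, smul_dotProduct, dotProduct_smul, hszz, smul_eq_mul, smul_eq_mul]
      rw [show ((c:ℂ) * ((c:ℂ) * (s:ℂ))) = (((c^2 * s : ℝ)):ℂ) by push_cast; ring]
      rw [hcsq, inv_mul_cancel₀ (ne_of_gt hspos)]
      norm_num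
    have hΨu : star Ψ ⬝ᵥ u = 0 := by rw [hu, dotProduct_smul, hz, smul_zero]
    have := hβub u huu hΨu
    have hform : (star u ⬝ᵥ (Ω *ᵥ u)).re = c^2 * (star z ⬝ᵥ (Ω *ᵥ z)).re := by
      rw [hu, hstaru, mulVec_smul, smul_dotProduct, dotProduct_smul, smul_eq_mul, smul_eq_mul]
      rw [show ((c:ℂ) * ((c:ℂ) * (star z ⬝ᵥ (Ω *ᵥ z)))) = (((c^2:ℝ)):ℂ) * (star z ⬝ᵥ (Ω *ᵥ z)) by push_cast; ring]
      simp [Complex.mul_re, ← Complex.ofReal_pow]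
    rw [hform, hcsq] at this
    calc (star z ⬝ᵥ (Ω *ᵥ z)).re = s * (s⁻¹ * (star z ⬝ᵥ (Ω *ᵥ z)).re) := by
          field_simp
      _ ≤ s * β := by
          exact mul_le_mul_of_nonneg_left this hspos.le
      _ = β * s := mul_comm _ _


lemma key_posSemidef {Ω : Matrix (Fin n) (Fin n) ℂ} (hΩherm : Ω.IsHermitian)
    (hΩpos : Ω.PosSemidef) {Ψ : Fin n → ℂ} (hΨunit : star Ψ ⬝ᵥ Ψ = 1)
    (hfix : Ω *ᵥ Ψ = Ψ) {β : ℝ}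
    (hβub : ∀ z : Fin n → ℂ, star Ψ ⬝ᵥ z = 0 →
        (star z ⬝ᵥ (Ω *ᵥ z)).re ≤ β * (star z ⬝ᵥ z).re) :
    ((β : ℂ) • 1 + ((1 - β : ℝ) : ℂ) • vecMulVec Ψ (star Ψ) - Ω).PosSemidef := by
  have hvec : star Ψ ᵥ* Ω = star Ψ := by
    have := star_mulVec Ω Ψ
    rw [hfix, hΩherm.eq] at this
    exact this.symm
  apply PosSemidef.of_dotProduct_mulVec_nonneg
  · have h1 := hΩherm.eq
    have h2 := (posSemidef_outer Ψ).1.eq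
    unfold IsHermitian
    rw [conjTranspose_sub, conjTranspose_add, conjTranspose_smul, conjTranspose_smul,
      conjTranspose_one, h1, h2]
    norm_num
  · intro y
    set cc : ℂ := star Ψ ⬝ᵥ y with hcc
    set z : Fin n → ℂ := y - cc • Ψ with hz
    have hstarz : star z = star y - star cc • star Ψ := by
      rw [hz, star_sub, star_smul]
    have hΨz : star Ψ ⬝ᵥ z = 0 := by
      rw [hz, dotProduct_sub, dotProduct_smul, hΨunit, smul_eq_mul, mul_one, sub_self]
    have hzΨ : star z ⬝ᵥ Ψ = 0 := by
      rw [star_dotProduct (v := z), hΨz, star_zero]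
    have hyΨ : star y ⬝ᵥ Ψ = star cc := by
      rw [star_dotProduct (v := y), hcc]
    have hΨΩy : star Ψ ⬝ᵥ (Ω *ᵥ y) = cc := by
      rw [dotProduct_mulVec, hvec, hcc]
    -- E, N decompositions
    have hE : star z ⬝ᵥ (Ω *ᵥ z) = star y ⬝ᵥ (Ω *ᵥ y) - cc * star cc := by
      rw [hz, mulVec_sub, mulVec_smul, hfix, hstarz]
      rw [hz] at hstarz
      simp only [sub_dotProduct, dotProduct_sub, smul_dotProduct, dotProduct_smul,
        smul_eq_mul, hyΨ, hΨΩy, hΨunit, mul_one]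
      ring
    have hN : star z ⬝ᵥ z = star y ⬝ᵥ y - cc * star cc := by
      rw [hz, hstarz]
      simp only [sub_dotProduct, dotProduct_sub, smul_dotProduct, dotProduct_smul,
        smul_eq_mul, hyΨ, ← hcc, hΨunit, mul_one]
      ring
    have hF : star y ⬝ᵥ (((β : ℂ) • 1 + ((1 - β : ℝ) : ℂ) • vecMulVec Ψ (star Ψ) - Ω) *ᵥ y)
        = (β : ℂ) * (star y ⬝ᵥ y) + ((1 - β : ℝ) : ℂ) * (cc * star cc)
          - star y ⬝ᵥ (Ω *ᵥ y) := by
      rw [sub_mulVec, add_mulVec, smul_mulVec, smul_mulVec, one_mulVec,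
        vecMulVec_mulVec]
      simp only [dotProduct_sub, dotProduct_add, dotProduct_smul, smul_dotProduct,
        smul_eq_mul, hyΨ, ← hcc]
    rw [hF]
    -- real/imaginary analysis
    have hEz := hβub z hΨz
    have hEim : (star y ⬝ᵥ (Ω *ᵥ y)).im = 0 := (Complex.le_def.mp (hΩpos.dotProduct_mulVec_nonneg y)).2.symm
    have hNim : (star y ⬝ᵥ y).im = 0 :=
      (Complex.le_def.mp (dotProduct_star_self_nonneg y)).2.symm
    have hqim : (cc * star cc).im = 0 := by simp [Complex.mul_im, RingHom.id_apply]; ring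
    have hzim2 : (star z ⬝ᵥ (Ω *ᵥ z)).im = 0 :=
      (Complex.le_def.mp (hΩpos.dotProduct_mulVec_nonneg z)).2.symm
    rw [hE, hN] at hEz
    simp only [Complex.sub_re, Complex.mul_re, Complex.star_def, Complex.conj_re,
      Complex.conj_im] at hEz
    rw [Complex.le_def]
    constructor
    · simp only [Complex.zero_re, Complex.add_re, Complex.sub_re, Complex.mul_re,
        Complex.mul_im, Complex.ofReal_re, Complex.ofReal_im, Complex.star_def,
        Complex.conj_re, Complex.conj_im, hNim, hEim, mul_zero, zero_mul, sub_zero]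
      nlinarith [hEz]
    · simp only [Complex.zero_im, Complex.add_im, Complex.sub_im, Complex.mul_im,
        Complex.mul_re, Complex.ofReal_re, Complex.ofReal_im, Complex.star_def,
        Complex.conj_re, Complex.conj_im, hNim, hEim, mul_zero, zero_mul, sub_zero]
      ring

end Stmt0Aux


/-- for a Hermitian operator Ω with 0 ≤ Ω ≤ I and unit eigenvector Ψ with
eigenvalue 1, the maximum of tr(Ωσ) over density operators σ with ⟨Ψ|σ|Ψ⟩ ≤ 1−ε equals
1 − (1−β(Ω))ε, where β(Ω) is the second largest eigenvalue (the largest Rayleigh quotient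
on the orthogonal complement of Ψ). -/
theorem stmt0 {n : ℕ} (Ω : Matrix (Fin n) (Fin n) ℂ)
    (hΩherm : Ω.IsHermitian) (hΩpos : Ω.PosSemidef) (hΩle : (1 - Ω).PosSemidef)
    (Ψ : Fin n → ℂ) (hΨunit : star Ψ ⬝ᵥ Ψ = 1) (hfix : Ω *ᵥ Ψ = Ψ)
    (β : ℝ)
    (hβ : IsGreatest {r : ℝ | ∃ x : Fin n → ℂ, star x ⬝ᵥ x = 1 ∧ star Ψ ⬝ᵥ x = 0 ∧
        (star x ⬝ᵥ (Ω *ᵥ x)).re = r} β)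
    (ε : ℝ) (hε0 : 0 ≤ ε) (hε1 : ε ≤ 1) :
    IsGreatest {t : ℝ | ∃ σ : Matrix (Fin n) (Fin n) ℂ, σ.PosSemidef ∧ σ.trace = 1 ∧
        (star Ψ ⬝ᵥ (σ *ᵥ Ψ)).re ≤ 1 - ε ∧ ((Ω * σ).trace).re = t}
      (1 - (1 - β) * ε) := by
  obtain ⟨⟨x, hxu, hxo, hxβ⟩, hub⟩ := hβ
  have hβub : ∀ v : Fin n → ℂ, star v ⬝ᵥ v = 1 → star Ψ ⬝ᵥ v = 0 →
      (star v ⬝ᵥ (Ω *ᵥ v)).re ≤ β := fun v h1 h2 => hub ⟨v, h1, h2, rfl⟩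
  have hray : ∀ z : Fin n → ℂ, star Ψ ⬝ᵥ z = 0 →
      (star z ⬝ᵥ (Ω *ᵥ z)).re ≤ β * (star z ⬝ᵥ z).re :=
    fun z hz => Stmt0Aux.rayleigh_bound hΩpos hβub z hz
  have hβ1 : β ≤ 1 := by
    have h := (Complex.le_def.mp (hΩle.dotProduct_mulVec_nonneg x)).1
    rw [sub_mulVec, one_mulVec, dotProduct_sub, hxu] at h
    simp only [Complex.zero_re, Complex.sub_re, Complex.one_re, hxβ] at h
    linarith
  constructor
  · -- membership: σ₀ = (1-ε)|Ψ⟩⟨Ψ| + ε|x⟩⟨x|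
    refine ⟨((1 - ε : ℝ) : ℂ) • vecMulVec Ψ (star Ψ) + ((ε : ℝ) : ℂ) • vecMulVec x (star x),
      ?_, ?_, ?_, ?_⟩
    · exact (Stmt0Aux.posSemidef_real_smul (Stmt0Aux.posSemidef_outer Ψ) (by linarith)).add
        (Stmt0Aux.posSemidef_real_smul (Stmt0Aux.posSemidef_outer x) hε0)
    · rw [trace_add, trace_smul, trace_smul, Stmt0Aux.trace_vecMulVec, Stmt0Aux.trace_vecMulVec, hΨunit, hxu]
      simp
    · have hxΨ : star x ⬝ᵥ Ψ = 0 := by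
        rw [star_dotProduct (v := x), hxo, star_zero]
      rw [add_mulVec, smul_mulVec, smul_mulVec, Stmt0Aux.vecMulVec_mulVec,
        Stmt0Aux.vecMulVec_mulVec, hΨunit, hxΨ, dotProduct_add, dotProduct_smul, dotProduct_smul]
      simp [hΨunit]
    · have hΩΨ : star Ψ ⬝ᵥ (Ω *ᵥ Ψ) = 1 := by rw [hfix, hΨunit]
      have hxim : (star x ⬝ᵥ (Ω *ᵥ x)).im = 0 := (Complex.le_def.mp (hΩpos.dotProduct_mulVec_nonneg x)).2.symm
      rw [mul_add, mul_smul_comm, mul_smul_comm, trace_add, trace_smul, trace_smul,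
        Stmt0Aux.trace_mul_vecMulVec, Stmt0Aux.trace_mul_vecMulVec, hΩΨ]
      simp only [smul_eq_mul, mul_one, Complex.add_re, Complex.mul_re, Complex.ofReal_re,
        Complex.ofReal_im, Complex.one_re, Complex.one_im, hxβ, hxim, mul_zero, zero_mul,
        sub_zero]
      ring
  · -- upper bound
    rintro t ⟨σ, hσpsd, hσtr, hσcon, rfl⟩
    have hkey := Stmt0Aux.key_posSemidef hΩherm hΩpos hΨunit hfix hray
    have h0 := Stmt0Aux.trace_mul_nonneg hkey hσpsd
    have hW : (vecMulVec Ψ (star Ψ) * σ).trace = star Ψ ⬝ᵥ (σ *ᵥ Ψ) := by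
      rw [trace_mul_comm, Stmt0Aux.trace_mul_vecMulVec]
    rw [sub_mul, add_mul, smul_mul_assoc, smul_mul_assoc, one_mul, trace_sub, trace_add,
      trace_smul, trace_smul, hσtr, hW] at h0
    have hXim : (star Ψ ⬝ᵥ (σ *ᵥ Ψ)).im = 0 := (Complex.le_def.mp (hσpsd.dotProduct_mulVec_nonneg Ψ)).2.symm
    have h1 := (Complex.le_def.mp h0).1
    simp only [Complex.zero_re, Complex.sub_re, Complex.add_re, smul_eq_mul,
      Complex.mul_re, Complex.ofReal_re, Complex.ofReal_im, Complex.one_re, Complex.one_im,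
      hXim, mul_zero, zero_mul, sub_zero, mul_one] at h1
    nlinarith [hσcon, hβ1, hε0, hε1, h1]
end

section
/- Let Ω = Σ_l p_l P_l be a convex combination of orthogonal projectors P_l (l = 1,…,g) on a finite-dimensional Hilbert space, each satisfying P_l Ψ = Ψ for a fixed unit vector Ψ, with p_l > 0 summing to 1, and suppose each P_l has rank at least 2. Then the second largest eigenvalue β(Ω) satisfies β(Ω) ≥ 1/g. Equality holds if and only if p_l = 1/g for all l and the operators P_l − |Ψ⟩⟨Ψ| are mutually orthogonal (i.e. their pairwise products vanish). -/
open Matrix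
open scoped ComplexOrder

private lemma mul_vmv {n : ℕ} (A : Matrix (Fin n) (Fin n) ℂ) (u v : Fin n → ℂ) :
    A * vecMulVec u v = vecMulVec (A *ᵥ u) v := by
  ext i j
  simp [Matrix.mul_apply, vecMulVec_apply, Matrix.mulVec, dotProduct, Finset.sum_mul, mul_assoc]

private lemma vmv_mulVec {n : ℕ} (u v x : Fin n → ℂ) :
    vecMulVec u v *ᵥ x = (v ⬝ᵥ x) • u := by
  ext i
  simp only [Matrix.mulVec, dotProduct, vecMulVec_apply, Pi.smul_apply, smul_eq_mul,
    Finset.sum_mul]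
  exact Finset.sum_congr rfl fun j _ => by ring

private lemma sum_mulVec' {ι n : Type*} [Fintype ι] [Fintype n] (A : ι → Matrix n n ℂ)
    (x : n → ℂ) : (∑ l, A l) *ᵥ x = ∑ l, A l *ᵥ x := by
  ext i
  simp only [Matrix.mulVec, dotProduct, Finset.sum_apply, Matrix.sum_apply, Finset.sum_mul]
  exact Finset.sum_comm

private lemma dot_sum' {ι n : Type*} [Fintype ι] [Fintype n] (x : n → ℂ) (v : ι → n → ℂ) :
    x ⬝ᵥ (∑ l, v l) = ∑ l, x ⬝ᵥ v l := by
  simp only [dotProduct, Finset.sum_apply, Finset.mul_sum]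
  exact Finset.sum_comm

private lemma star_dot_self {n : ℕ} (v : Fin n → ℂ) :
    star v ⬝ᵥ v = ((∑ i, Complex.normSq (v i) : ℝ) : ℂ) := by
  simp only [dotProduct, Pi.star_apply, Complex.ofReal_sum]
  exact Finset.sum_congr rfl fun i _ => (Complex.normSq_eq_conj_mul_self).symm ▸ rfl

private lemma herm_idem_quad {n : ℕ} {A : Matrix (Fin n) (Fin n) ℂ} (hA : A.IsHermitian)
    (h2 : A * A = A) (x : Fin n → ℂ) :
    star x ⬝ᵥ (A *ᵥ x) = star (A *ᵥ x) ⬝ᵥ (A *ᵥ x) := by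
  have h : star (A *ᵥ x) = star x ᵥ* A := by rw [Matrix.star_mulVec, hA.eq]
  rw [h, ← Matrix.dotProduct_mulVec, Matrix.mulVec_mulVec, h2]

private lemma quad_nonneg {n : ℕ} {A : Matrix (Fin n) (Fin n) ℂ} (hA : A.IsHermitian)
    (h2 : A * A = A) (x : Fin n → ℂ) : 0 ≤ (star x ⬝ᵥ (A *ᵥ x)).re := by
  rw [herm_idem_quad hA h2, star_dot_self]
  simp only [Complex.ofReal_re]
  exact Finset.sum_nonneg fun i _ => Complex.normSq_nonneg _

private lemma quad_eq_zero {n : ℕ} {A : Matrix (Fin n) (Fin n) ℂ} (hA : A.IsHermitian)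
    (h2 : A * A = A) (x : Fin n → ℂ) (h : (star x ⬝ᵥ (A *ᵥ x)).re = 0) : A *ᵥ x = 0 := by
  rw [herm_idem_quad hA h2, star_dot_self] at h
  simp only [Complex.ofReal_re] at h
  have h' := (Finset.sum_eq_zero_iff_of_nonneg
    (fun i _ => Complex.normSq_nonneg ((A *ᵥ x) i))).1 h
  funext i
  exact Complex.normSq_eq_zero.1 (h' i (Finset.mem_univ i))

/-- for Ω = Σ_l p_l P_l a convex combination of projectors of rank ≥ 2 fixing a
unit vector Ψ, the second largest eigenvalue β(Ω) satisfies β(Ω) ≥ 1/g, with equality iff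
p_l = 1/g for all l and the operators P_l − |Ψ⟩⟨Ψ| are mutually orthogonal. -/
theorem stmt2 {n g : ℕ} (hg : 0 < g)
    (P : Fin g → Matrix (Fin n) (Fin n) ℂ)
    (hPherm : ∀ l, (P l).IsHermitian) (hPproj : ∀ l, P l * P l = P l)
    (hPrank : ∀ l, 2 ≤ (P l).rank)
    (Ψ : Fin n → ℂ) (hΨunit : star Ψ ⬝ᵥ Ψ = 1) (hPfix : ∀ l, P l *ᵥ Ψ = Ψ)
    (p : Fin g → ℝ) (hp : ∀ l, 0 < p l) (hpsum : ∑ l, p l = 1)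
    (Ω : Matrix (Fin n) (Fin n) ℂ) (hΩ : Ω = ∑ l, (p l : ℂ) • P l)
    (β : ℝ)
    (hβ : IsGreatest {r : ℝ | ∃ x : Fin n → ℂ, star x ⬝ᵥ x = 1 ∧ star Ψ ⬝ᵥ x = 0 ∧
        (star x ⬝ᵥ (Ω *ᵥ x)).re = r} β) :
    1 / (g : ℝ) ≤ β ∧
    (β = 1 / (g : ℝ) ↔
      ((∀ l, p l = 1 / (g : ℝ)) ∧
        ∀ l m, l ≠ m →
          (P l - vecMulVec Ψ (star Ψ)) * (P m - vecMulVec Ψ (star Ψ)) = 0)) := by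
  classical
  have hgR : (0:ℝ) < g := Nat.cast_pos.2 hg
  set E : Matrix (Fin n) (Fin n) ℂ := vecMulVec Ψ (star Ψ) with hE
  have hEvec : ∀ x, E *ᵥ x = (star Ψ ⬝ᵥ x) • Ψ := fun x => by rw [hE]; exact vmv_mulVec _ _ _
  have hEherm : Eᴴ = E := by
    ext i j
    simp [hE, vecMulVec_apply, Matrix.conjTranspose_apply, mul_comm]
  have hEΨ : E *ᵥ Ψ = Ψ := by rw [hEvec, hΨunit, one_smul]
  have hE2 : E * E = E := by
    rw [hE, mul_vmv, vmv_mulVec, hΨunit, one_smul]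
  have hPE : ∀ l, P l * E = E := fun l => by rw [hE, mul_vmv, hPfix l]
  have hEP : ∀ l, E * P l = E := fun l => by
    have h := congrArg conjTranspose (hPE l)
    rwa [Matrix.conjTranspose_mul, hEherm, (hPherm l).eq] at h
  set Q : Fin g → Matrix (Fin n) (Fin n) ℂ := fun l => P l - E with hQdef
  have hQl : ∀ l, Q l = P l - E := fun l => rfl
  have hQherm : ∀ l, (Q l).IsHermitian := fun l => (hPherm l).sub hEherm
  have hQ2 : ∀ l, Q l * Q l = Q l := fun l => by
    rw [hQl, sub_mul, mul_sub, mul_sub, hPproj l, hPE l, hEP l, hE2]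
    abel
  have hPQ : ∀ l, P l * Q l = Q l := fun l => by
    rw [hQl, mul_sub, hPproj l, hPE l]
  have hQΨ : ∀ l, Q l *ᵥ Ψ = 0 := fun l => by
    rw [hQl, Matrix.sub_mulVec, hPfix l, hEΨ, sub_self]
  have hΨQ : ∀ l (y : Fin n → ℂ), star Ψ ⬝ᵥ (Q l *ᵥ y) = 0 := by
    intro l y
    rw [Matrix.dotProduct_mulVec]
    have h : star Ψ ᵥ* Q l = 0 := by
      have h2 := Matrix.star_mulVec (Q l) Ψ
      rw [hQΨ l, (hQherm l).eq] at h2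
      simpa using h2.symm
    rw [h, zero_dotProduct]
  -- nonzero-ness of Q l
  have hQy : ∀ l, ∃ y, Q l *ᵥ y ≠ 0 := by
    intro l
    by_contra h
    push_neg at h
    have hQ0 : Q l = 0 := by
      ext i j
      have h2 := congrFun (h (Pi.single j 1)) i
      simpa [Matrix.mulVec_single] using h2
    have hPEq : P l = E := by
      have h3 := hQl l
      rw [hQ0] at h3
      exact sub_eq_zero.1 h3.symm
    have h1 : (P l).rank ≤ 1 := by
      rw [hPEq, hE, Matrix.vecMulVec_eq Unit]
      exact le_trans (Matrix.rank_mul_le_left _ _)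
        (by simpa using Matrix.rank_le_card_width (replicateCol Unit Ψ))
    have := hPrank l
    omega
  -- quadratic form of Ω
  have hΩform : ∀ x : Fin n → ℂ, (star x ⬝ᵥ (Ω *ᵥ x)).re
      = ∑ l, p l * (star x ⬝ᵥ (P l *ᵥ x)).re := by
    intro x
    rw [hΩ, sum_mulVec', dot_sum', Complex.re_sum]
    refine Finset.sum_congr rfl fun l _ => ?_
    rw [Matrix.smul_mulVec, dotProduct_smul, smul_eq_mul, Complex.re_ofReal_mul]
  -- normalization
  have hmem : ∀ (w : Fin n → ℂ), w ≠ 0 → star Ψ ⬝ᵥ w = 0 →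
      ∃ (a : ℝ) (x : Fin n → ℂ), 0 < a ∧ x = (a:ℂ) • w ∧ star x ⬝ᵥ x = 1 ∧
        star Ψ ⬝ᵥ x = 0 := by
    intro w hw hperp
    set c : ℝ := ∑ i, Complex.normSq (w i) with hc
    have hcpos : 0 < c := by
      rcases (Finset.sum_nonneg fun i (_ : i ∈ Finset.univ) =>
        Complex.normSq_nonneg (w i)).lt_or_eq with h | h
      · exact h
      · exfalso
        apply hw
        funext i
        exact Complex.normSq_eq_zero.1
          ((Finset.sum_eq_zero_iff_of_nonneg
            (fun i _ => Complex.normSq_nonneg (w i))).1 h.symm i (Finset.mem_univ i))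
    have hs : Real.sqrt c ≠ 0 := ne_of_gt (Real.sqrt_pos.2 hcpos)
    have ha : (Real.sqrt c)⁻¹ * ((Real.sqrt c)⁻¹ * c) = 1 := by
      rw [← Real.mul_self_sqrt hcpos.le]
      field_simp
      rw [Real.sqrt_sq (Real.sqrt_nonneg _)]
    refine ⟨(Real.sqrt c)⁻¹, ((((Real.sqrt c)⁻¹ : ℝ)) : ℂ) • w, by positivity, rfl, ?_, ?_⟩
    · rw [star_smul, smul_dotProduct, dotProduct_smul, star_dot_self, ← hc]
      simp only [Complex.star_def, Complex.conj_ofReal, smul_eq_mul]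
      exact_mod_cast congrArg (fun r : ℝ => (r : ℂ)) ha
    · rw [dotProduct_smul, hperp, smul_zero]
  -- key: every p l is at most β
  have hpleβ : ∀ l, p l ≤ β := by
    intro l
    obtain ⟨y, hy⟩ := hQy l
    obtain ⟨a, x, hapos, hxdef, hxunit, hxperp⟩ := hmem (Q l *ᵥ y) hy (hΨQ l y)
    have hPlx : P l *ᵥ x = x := by
      rw [hxdef, Matrix.mulVec_smul]
      congr 1
      rw [Matrix.mulVec_mulVec, hPQ l]
    have hrβ : (star x ⬝ᵥ (Ω *ᵥ x)).re ≤ β := hβ.2 ⟨x, hxunit, hxperp, rfl⟩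
    have hterm : p l * (star x ⬝ᵥ (P l *ᵥ x)).re = p l := by
      rw [hPlx, hxunit]; simp
    calc p l = p l * (star x ⬝ᵥ (P l *ᵥ x)).re := hterm.symm
      _ ≤ ∑ m, p m * (star x ⬝ᵥ (P m *ᵥ x)).re :=
          Finset.single_le_sum (fun m _ => mul_nonneg (hp m).le
            (quad_nonneg (hPherm m) (hPproj m) x)) (Finset.mem_univ l)
      _ = (star x ⬝ᵥ (Ω *ᵥ x)).re := (hΩform x).symm
      _ ≤ β := hrβ
  -- the main inequality
  have hmain : 1 / (g:ℝ) ≤ β := by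
    rw [div_le_iff₀ hgR]
    have h1 : (1:ℝ) ≤ ∑ _l : Fin g, β := by
      rw [← hpsum]; exact Finset.sum_le_sum fun l _ => hpleβ l
    simpa [Finset.sum_const, Finset.card_univ, mul_comm] using h1
  refine ⟨hmain, ?_, ?_⟩
  · -- forward direction
    intro hβeq
    have hpl : ∀ l, p l = 1 / (g:ℝ) := by
      have hle : ∀ l, p l ≤ 1 / (g:ℝ) := fun l => hβeq ▸ hpleβ l
      have hsum0 : ∑ l : Fin g, (1/(g:ℝ) - p l) = 0 := by
        rw [Finset.sum_sub_distrib, hpsum, Finset.sum_const, Finset.card_univ,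
          Fintype.card_fin, nsmul_eq_mul]
        field_simp
        exact sub_self _
      intro l
      have h0 := (Finset.sum_eq_zero_iff_of_nonneg
        (fun m _ => sub_nonneg.2 (hle m))).1 hsum0 l (Finset.mem_univ l)
      linarith
    refine ⟨hpl, ?_⟩
    intro l m hlm
    show Q l * Q m = 0
    have key : ∀ y, Q l *ᵥ (Q m *ᵥ y) = 0 := by
      intro y
      by_cases hw : Q m *ᵥ y = 0
      · rw [hw, Matrix.mulVec_zero]
      · obtain ⟨a, x, hapos, hxdef, hxunit, hxperp⟩ := hmem (Q m *ᵥ y) hw (hΨQ m y)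
        have hPmx : P m *ᵥ x = x := by
          rw [hxdef, Matrix.mulVec_smul]
          congr 1
          rw [Matrix.mulVec_mulVec, hPQ m]
        have hrle : (star x ⬝ᵥ (Ω *ᵥ x)).re ≤ 1/(g:ℝ) :=
          hβeq ▸ hβ.2 ⟨x, hxunit, hxperp, rfl⟩
        have hqm : p m * (star x ⬝ᵥ (P m *ᵥ x)).re = 1/(g:ℝ) := by
          rw [hPmx, hxunit, hpl m]; simp
        have hsplit := Finset.add_sum_erase Finset.univ
          (fun k => p k * (star x ⬝ᵥ (P k *ᵥ x)).re) (Finset.mem_univ m)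
        have hrest : ∑ k ∈ Finset.univ.erase m, p k * (star x ⬝ᵥ (P k *ᵥ x)).re ≤ 0 := by
          have heq : (star x ⬝ᵥ (Ω *ᵥ x)).re
              = 1/(g:ℝ) + ∑ k ∈ Finset.univ.erase m, p k * (star x ⬝ᵥ (P k *ᵥ x)).re := by
            rw [hΩform x, ← hsplit]
            simp only [hqm]
          linarith
        have hnn : ∀ k ∈ Finset.univ.erase m, 0 ≤ p k * (star x ⬝ᵥ (P k *ᵥ x)).re :=
          fun k _ => mul_nonneg (hp k).le (quad_nonneg (hPherm k) (hPproj k) x)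
        have hzero := (Finset.sum_eq_zero_iff_of_nonneg hnn).1
          (le_antisymm hrest (Finset.sum_nonneg hnn))
        have hql : (star x ⬝ᵥ (P l *ᵥ x)).re = 0 := by
          have hl' := hzero l (Finset.mem_erase.2 ⟨hlm, Finset.mem_univ l⟩)
          rcases mul_eq_zero.1 hl' with h | h
          · exact absurd h (hp l).ne'
          · exact h
        have hPlx : P l *ᵥ x = 0 := quad_eq_zero (hPherm l) (hPproj l) x hql
        have hQlx : Q l *ᵥ x = 0 := by
          rw [hQl, Matrix.sub_mulVec, hPlx, hEvec, hxperp, zero_smul, sub_self]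
        have haC : (a:ℂ) ≠ 0 := by exact_mod_cast hapos.ne'
        have h2 : (a:ℂ) • (Q l *ᵥ (Q m *ᵥ y)) = 0 := by
          rw [← Matrix.mulVec_smul, ← hxdef, hQlx]
        exact (smul_eq_zero.1 h2).resolve_left haC
    ext i j
    have h3 := key (Pi.single j 1)
    rw [Matrix.mulVec_mulVec] at h3
    have h4 := congrFun h3 i
    simpa [Matrix.mulVec_single] using h4
  · -- converse direction
    rintro ⟨hpl, horth⟩
    have horth' : ∀ l m, l ≠ m → Q l * Q m = 0 := horth
    refine le_antisymm ?_ hmain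
    obtain ⟨x, hxunit, hxperp, hxval⟩ := hβ.1
    set S : Matrix (Fin n) (Fin n) ℂ := ∑ l, Q l with hS
    have hSherm : S.IsHermitian := by
      show Sᴴ = S
      rw [hS, Matrix.conjTranspose_sum]
      exact Finset.sum_congr rfl fun l _ => (hQherm l).eq
    have hS2 : S * S = S := by
      rw [hS, Finset.sum_mul_sum]
      refine Finset.sum_congr rfl fun l _ => ?_
      rw [Finset.sum_eq_single l (fun m _ hml => horth' l m (Ne.symm hml))
        (fun h => absurd (Finset.mem_univ l) h), hQ2 l]
    have hT2 : (1 - S) * (1 - S) = 1 - S := by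
      rw [sub_mul, one_mul, mul_sub, mul_one, hS2, sub_self, sub_zero]
    have hTherm : (1 - S).IsHermitian := Matrix.isHermitian_one.sub hSherm
    have hPx : ∀ l, P l *ᵥ x = Q l *ᵥ x := fun l => by
      rw [hQl, Matrix.sub_mulVec, hEvec, hxperp, zero_smul, sub_zero]
    have hβval : β = (1/(g:ℝ)) * (star x ⬝ᵥ (S *ᵥ x)).re := by
      rw [← hxval, hΩform, hS, sum_mulVec', dot_sum', Complex.re_sum, Finset.mul_sum]
      exact Finset.sum_congr rfl fun l _ => by rw [hpl l, hPx l]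
    have hb : (star x ⬝ᵥ (S *ᵥ x)).re ≤ 1 := by
      have h0 := quad_nonneg hTherm hT2 x
      rw [Matrix.sub_mulVec, Matrix.one_mulVec, dotProduct_sub, Complex.sub_re, hxunit] at h0
      simp only [Complex.one_re] at h0
      linarith
    rw [hβval]
    calc (1/(g:ℝ)) * (star x ⬝ᵥ (S *ᵥ x)).re ≤ (1/(g:ℝ)) * 1 :=
          mul_le_mul_of_nonneg_left hb (by positivity)
      _ = 1/(g:ℝ) := mul_one _
end

section
/- Let B₁ and B₂ be two orthonormal bases of a d-dimensional complex Hilbert space. Then tr[P(B₁)P(B₂)] = Σ_{ψ∈B₁, φ∈B₂} |⟨ψ|φ⟩|⁴ ≥ 1, with equality if and only if |⟨ψ|φ⟩|² = 1/d for all ψ ∈ B₁ and φ ∈ B₂. -/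
open Matrix
open scoped ComplexOrder

/-- The conjugate-basis test projector P(B) = Σ_{ψ∈B} |ψ⟩⟨ψ| ⊗ |ψ*⟩⟨ψ*| on ℂ^d ⊗ ℂ^d. -/
noncomputable def projCB (d : ℕ) (B : Fin d → Fin d → ℂ) :
    Matrix (Fin d × Fin d) (Fin d × Fin d) ℂ :=
  ∑ i, Matrix.kroneckerMap (· * ·) (Matrix.vecMulVec (B i) (star (B i)))
      (Matrix.vecMulVec (star (B i)) (B i))

/-- The maximally entangled state |Φ⟩ = d^{-1/2} Σ_j |j⟩⊗|j⟩ as a vector on Fin d × Fin d. -/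
noncomputable def PhiVec (d : ℕ) : Fin d × Fin d → ℂ :=
  fun p => if p.1 = p.2 then ((Real.sqrt d : ℝ) : ℂ)⁻¹ else 0

/-- The rank-one projector |Φ⟩⟨Φ|. -/
noncomputable def PhiMat (d : ℕ) : Matrix (Fin d × Fin d) (Fin d × Fin d) ℂ :=
  Matrix.vecMulVec (PhiVec d) (star (PhiVec d))

/-- B is an orthonormal basis of ℂ^d. -/
def IsONB (d : ℕ) (B : Fin d → Fin d → ℂ) : Prop :=
  ∀ i j, star (B i) ⬝ᵥ B j = if i = j then 1 else 0

open scoped Kronecker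

lemma trace_vmv_mul {d : ℕ} (u v w z : Fin d → ℂ) :
    (Matrix.vecMulVec u v * Matrix.vecMulVec w z).trace = (v ⬝ᵥ w) * (z ⬝ᵥ u) := by
  simp only [Matrix.trace, Matrix.diag, Matrix.mul_apply, Matrix.vecMulVec_apply, dotProduct,
    Finset.sum_mul_sum]
  rw [Finset.sum_comm]
  exact Finset.sum_congr rfl fun k _ => Finset.sum_congr rfl fun i _ => by ring

lemma term_eq {d : ℕ} (u v : Fin d → ℂ) :
    (star u ⬝ᵥ v) * (star v ⬝ᵥ u) * ((u ⬝ᵥ star v) * (v ⬝ᵥ star u))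
      = ((‖star u ⬝ᵥ v‖ ^ 4 : ℝ) : ℂ) := by
  have h1 : star v ⬝ᵥ u = (starRingEnd ℂ) (star u ⬝ᵥ v) := by
    simp only [dotProduct, Pi.star_apply, RCLike.star_def, map_sum, _root_.map_mul,
      Complex.conj_conj]
    exact Finset.sum_congr rfl fun k _ => mul_comm _ _
  have h2 : u ⬝ᵥ star v = (starRingEnd ℂ) (star u ⬝ᵥ v) := by
    simp only [dotProduct, Pi.star_apply, RCLike.star_def, map_sum, _root_.map_mul,
      Complex.conj_conj]
  have h3 : v ⬝ᵥ star u = star u ⬝ᵥ v := by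
    simp only [dotProduct, Pi.star_apply]
    exact Finset.sum_congr rfl fun k _ => mul_comm _ _
  rw [h1, h2, h3]
  set c := star u ⬝ᵥ v
  rw [show c * (starRingEnd ℂ) c * ((starRingEnd ℂ) c * c) = (c * (starRingEnd ℂ) c)^2 by ring,
    Complex.mul_conj]
  norm_cast
  rw [Complex.normSq_eq_norm_sq]
  ring

lemma trace_eq_aux {d : ℕ} (B1 B2 : Fin d → Fin d → ℂ) :
    (projCB d B1 * projCB d B2).trace =
      ((∑ i, ∑ j, ‖star (B1 i) ⬝ᵥ B2 j‖ ^ 4 : ℝ) : ℂ) := by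
  rw [projCB, projCB, Finset.sum_mul_sum, Matrix.trace_sum]
  push_cast
  refine Finset.sum_congr rfl fun i _ => ?_
  rw [Matrix.trace_sum]
  refine Finset.sum_congr rfl fun j _ => ?_
  rw [show Matrix.kroneckerMap (· * ·) (Matrix.vecMulVec (B1 i) (star (B1 i)))
        (Matrix.vecMulVec (star (B1 i)) (B1 i)) *
      Matrix.kroneckerMap (· * ·) (Matrix.vecMulVec (B2 j) (star (B2 j)))
        (Matrix.vecMulVec (star (B2 j)) (B2 j))
    = (Matrix.vecMulVec (B1 i) (star (B1 i)) * Matrix.vecMulVec (B2 j) (star (B2 j))) ⊗ₖ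
      (Matrix.vecMulVec (star (B1 i)) (B1 i) * Matrix.vecMulVec (star (B2 j)) (B2 j))
    from (Matrix.mul_kronecker_mul _ _ _ _).symm,
    Matrix.trace_kronecker, trace_vmv_mul, trace_vmv_mul]
  exact_mod_cast term_eq (B1 i) (B2 j)

lemma onb_complete {d : ℕ} (B : Fin d → Fin d → ℂ) (hB : IsONB d B) (k l : Fin d) :
    ∑ j, B j k * (starRingEnd ℂ) (B j l) = if k = l then 1 else 0 := by
  set U : Matrix (Fin d) (Fin d) ℂ := Matrix.of B with hU
  have h1 : U * Uᴴ = 1 := by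
    ext i j
    have h := hB j i
    simp only [dotProduct, Pi.star_apply, RCLike.star_def] at h
    simp only [Matrix.mul_apply, Matrix.conjTranspose_apply, Matrix.one_apply, hU, Matrix.of_apply,
      RCLike.star_def]
    rw [show (∑ x, B i x * (starRingEnd ℂ) (B j x)) =
      ∑ x, (starRingEnd ℂ) (B j x) * B i x from Finset.sum_congr rfl fun x _ => mul_comm _ _, h]
    simp [eq_comm]
  have h2 : Uᴴ * U = 1 := mul_eq_one_comm.mp h1
  have h3 := congrFun (congrFun h2 l) k
  simp only [Matrix.mul_apply, Matrix.conjTranspose_apply, Matrix.one_apply, hU, Matrix.of_apply,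
    RCLike.star_def] at h3
  rw [show (∑ j, B j k * (starRingEnd ℂ) (B j l)) =
    ∑ j, (starRingEnd ℂ) (B j l) * B j k from Finset.sum_congr rfl fun x _ => mul_comm _ _, h3]
  simp [eq_comm]

lemma rowsum_c {d : ℕ} (B1 B2 : Fin d → Fin d → ℂ) (hB1 : IsONB d B1) (hB2 : IsONB d B2)
    (i : Fin d) :
    ∑ j, (star (B1 i) ⬝ᵥ B2 j) * (starRingEnd ℂ) (star (B1 i) ⬝ᵥ B2 j) = 1 := by
  have expand : ∀ j, (star (B1 i) ⬝ᵥ B2 j) * (starRingEnd ℂ) (star (B1 i) ⬝ᵥ B2 j)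
      = ∑ k, ∑ l, ((starRingEnd ℂ) (B1 i k) * B1 i l) * (B2 j k * (starRingEnd ℂ) (B2 j l)) := by
    intro j
    simp only [dotProduct, Pi.star_apply, RCLike.star_def, map_sum, _root_.map_mul,
      Complex.conj_conj, Finset.sum_mul_sum]
    exact Finset.sum_congr rfl fun k _ => Finset.sum_congr rfl fun l _ => by ring
  simp only [expand]
  rw [Finset.sum_comm]
  have key : ∀ k, (∑ j, ∑ l, ((starRingEnd ℂ) (B1 i k) * B1 i l) * (B2 j k * (starRingEnd ℂ) (B2 j l)))
      = (starRingEnd ℂ) (B1 i k) * B1 i k := by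
    intro k
    rw [Finset.sum_comm]
    have h1 : ∀ l, (∑ j, ((starRingEnd ℂ) (B1 i k) * B1 i l) * (B2 j k * (starRingEnd ℂ) (B2 j l)))
        = ((starRingEnd ℂ) (B1 i k) * B1 i l) * (if k = l then 1 else 0) := by
      intro l
      rw [← Finset.mul_sum, onb_complete B2 hB2 k l]
    simp only [h1]
    simp [Finset.sum_ite_eq, mul_ite]
  simp only [key]
  have := hB1 i i
  simp only [dotProduct, Pi.star_apply, RCLike.star_def, if_pos rfl] at this
  exact this

lemma rowsum_r {d : ℕ} (B1 B2 : Fin d → Fin d → ℂ) (hB1 : IsONB d B1) (hB2 : IsONB d B2)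
    (i : Fin d) :
    ∑ j, ‖star (B1 i) ⬝ᵥ B2 j‖ ^ 2 = 1 := by
  have hc := rowsum_c B1 B2 hB1 hB2 i
  have hterm : ∀ j, (star (B1 i) ⬝ᵥ B2 j) * (starRingEnd ℂ) (star (B1 i) ⬝ᵥ B2 j)
      = ((‖star (B1 i) ⬝ᵥ B2 j‖ ^ 2 : ℝ) : ℂ) := by
    intro j
    rw [Complex.mul_conj]
    norm_cast
    rw [Complex.normSq_eq_norm_sq]
  simp only [hterm] at hc
  exact_mod_cast hc

/-- tr[P(B₁)P(B₂)] = Σ |⟨ψ|φ⟩|⁴ ≥ 1, with equality iff B₁, B₂ are mutually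
unbiased. -/
theorem stmt3 {d : ℕ} (hd : 0 < d) (B1 B2 : Fin d → Fin d → ℂ)
    (hB1 : IsONB d B1) (hB2 : IsONB d B2) :
    (projCB d B1 * projCB d B2).trace =
      ((∑ i, ∑ j, ‖star (B1 i) ⬝ᵥ B2 j‖ ^ 4 : ℝ) : ℂ) ∧
    (1 : ℝ) ≤ ∑ i, ∑ j, ‖star (B1 i) ⬝ᵥ B2 j‖ ^ 4 ∧
    ((∑ i, ∑ j, ‖star (B1 i) ⬝ᵥ B2 j‖ ^ 4 : ℝ) = 1 ↔
      ∀ i j, ‖star (B1 i) ⬝ᵥ B2 j‖ ^ 2 = 1 / (d : ℝ)) := by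
  have hd0 : (d : ℝ) ≠ 0 := Nat.cast_ne_zero.mpr hd.ne'
  set x : Fin d → Fin d → ℝ := fun i j => ‖star (B1 i) ⬝ᵥ B2 j‖ ^ 2 with hx
  have hx4 : ∀ i j, ‖star (B1 i) ⬝ᵥ B2 j‖ ^ 4 = (x i j) ^ 2 := fun i j => by
    simp only [hx]; ring
  have hrow : ∀ i, ∑ j, x i j = 1 := fun i => rowsum_r B1 B2 hB1 hB2 i
  have hS4 : (∑ i, ∑ j, ‖star (B1 i) ⬝ᵥ B2 j‖ ^ 4) = ∑ i, ∑ j, (x i j) ^ 2 := by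
    exact Finset.sum_congr rfl fun i _ => Finset.sum_congr rfl fun j _ => hx4 i j
  have hrowkey : ∀ i, ∑ j, (x i j - 1 / d) ^ 2
      = (∑ j, (x i j) ^ 2) - 2 * (1 / d) + d * (1 / d) ^ 2 := by
    intro i
    have h1 : ∀ j ∈ Finset.univ, (x i j - 1 / d) ^ 2
        = (x i j) ^ 2 - 2 * (1 / d) * x i j + (1 / d) ^ 2 := fun j _ => by ring
    rw [Finset.sum_congr rfl h1, Finset.sum_add_distrib, Finset.sum_sub_distrib,
      ← Finset.mul_sum, hrow i, Finset.sum_const, Finset.card_univ, Fintype.card_fin,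
      nsmul_eq_mul]
    ring
  have hkey : ∑ i, ∑ j, (x i j - 1 / d) ^ 2 = (∑ i, ∑ j, (x i j) ^ 2) - 1 := by
    rw [Finset.sum_congr rfl fun i _ => hrowkey i, Finset.sum_add_distrib,
      Finset.sum_sub_distrib, Finset.sum_const, Finset.sum_const, Finset.card_univ,
      Fintype.card_fin, nsmul_eq_mul, nsmul_eq_mul]
    field_simp
    ring
  have hnonneg : 0 ≤ ∑ i, ∑ j, (x i j - 1 / d) ^ 2 :=
    Finset.sum_nonneg fun i _ => Finset.sum_nonneg fun j _ => sq_nonneg _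
  refine ⟨trace_eq_aux B1 B2, ?_, ?_⟩
  · rw [hS4]; linarith [hkey ▸ hnonneg]
  · rw [hS4]
    constructor
    · intro hS1
      have hz : ∑ i, ∑ j, (x i j - 1 / d) ^ 2 = 0 := by rw [hkey, hS1]; ring
      intro i j
      have h1 := (Finset.sum_eq_zero_iff_of_nonneg
        (fun i _ => Finset.sum_nonneg fun j _ => sq_nonneg (x i j - 1 / d))).mp hz i
        (Finset.mem_univ i)
      have h2 := (Finset.sum_eq_zero_iff_of_nonneg
        (fun j _ => sq_nonneg (x i j - 1 / d))).mp h1 j (Finset.mem_univ j)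
      have := pow_eq_zero_iff (n := 2) (by norm_num) |>.mp h2
      have := sub_eq_zero.mp this
      simpa [hx] using this
    · intro hmub
      have hz : ∑ i, ∑ j, (x i j - 1 / d) ^ 2 = 0 := by
        refine Finset.sum_eq_zero fun i _ => Finset.sum_eq_zero fun j _ => ?_
        rw [show x i j = 1 / d from hmub i j]; ring
      linarith [hkey ▸ hz]
end

section
/- Let B₁ and B₂ be orthonormal bases of a d-dimensional Hilbert space, and set P̄(B_i) = P(B_i) − |Φ⟩⟨Φ|. Then P̄(B₁)·P̄(B₂) = 0 if and only if B₁ and B₂ are mutually unbiased. -/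
open Matrix
open scoped ComplexOrder

open Matrix
open scoped ComplexOrder

section Aux
variable {d : ℕ}

/-- the vector |ψ⟩⊗|ψ*⟩ -/
def vv (d : ℕ) (u : Fin d → ℂ) : Fin d × Fin d → ℂ :=
  fun p => u p.1 * star (u p.2)

noncomputable def rC (d : ℕ) : ℂ := ((Real.sqrt d : ℝ) : ℂ)

lemma rC_mul_rC (d : ℕ) : rC d * rC d = (d : ℂ) := by
  unfold rC
  rw [← Complex.ofReal_mul, Real.mul_self_sqrt (Nat.cast_nonneg d), Complex.ofReal_natCast]

lemma rC_ne_zero (hd : 0 < d) : rC d ≠ 0 := by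
  unfold rC
  exact_mod_cast ne_of_gt (Real.sqrt_pos.mpr (by exact_mod_cast hd))

lemma star_rC (d : ℕ) : star (rC d) = rC d := by
  unfold rC; exact Complex.conj_ofReal _

lemma PhiVec_eq (d : ℕ) : PhiVec d = fun p => if p.1 = p.2 then (rC d)⁻¹ else 0 := rfl

lemma star_PhiVec (d : ℕ) : star (PhiVec d) = PhiVec d := by
  funext p
  simp [PhiVec_eq, Pi.star_apply, apply_ite (star : ℂ → ℂ), star_inv₀, star_rC]

lemma smul_vecMulVec (r : ℂ) (a b : Fin d × Fin d → ℂ) :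
    vecMulVec (r • a) b = r • vecMulVec a b := by
  ext p q
  simp [vecMulVec_apply, mul_assoc]

lemma vecMulVec_smul_right (r : ℂ) (a b : Fin d × Fin d → ℂ) :
    vecMulVec a (r • b) = r • vecMulVec a b := by
  ext p q
  simp [vecMulVec_apply]
  ring

lemma sum_vecMulVec_left {ι : Type*} (s : Finset ι) (f : ι → (Fin d × Fin d → ℂ)) (b : Fin d × Fin d → ℂ) :
    ∑ i ∈ s, vecMulVec (f i) b = vecMulVec (∑ i ∈ s, f i) b := by
  ext p q
  simp [vecMulVec_apply, Finset.sum_apply, Matrix.sum_apply, Finset.sum_mul]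

lemma sum_vecMulVec_right {ι : Type*} (s : Finset ι) (a : Fin d × Fin d → ℂ) (f : ι → (Fin d × Fin d → ℂ)) :
    ∑ i ∈ s, vecMulVec a (f i) = vecMulVec a (∑ i ∈ s, f i) := by
  ext p q
  simp [vecMulVec_apply, Finset.sum_apply, Matrix.sum_apply, Finset.mul_sum]

lemma vecMulVec_mul (a b c e : Fin d × Fin d → ℂ) :
    vecMulVec a b * vecMulVec c e = (b ⬝ᵥ c) • vecMulVec a e := by
  ext p q
  simp only [mul_apply, vecMulVec_apply, Matrix.smul_apply, smul_eq_mul, dotProduct, Finset.sum_mul]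
  exact Finset.sum_congr rfl fun k _ => by ring

lemma vecMulVec_mulVec (a b x : Fin d × Fin d → ℂ) :
    vecMulVec a b *ᵥ x = (b ⬝ᵥ x) • a := by
  funext p
  simp only [mulVec, vecMulVec_apply, dotProduct, Pi.smul_apply, smul_eq_mul, Finset.sum_mul]
  exact Finset.sum_congr rfl fun k _ => by ring

lemma mulVec_sum' {ι : Type*} (s : Finset ι) (A : ι → Matrix (Fin d × Fin d) (Fin d × Fin d) ℂ)
    (y : Fin d × Fin d → ℂ) : (∑ i ∈ s, A i) *ᵥ y = ∑ i ∈ s, A i *ᵥ y := by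
  funext p
  simp only [mulVec, dotProduct, Matrix.sum_apply, Finset.sum_apply, Finset.sum_mul]
  exact Finset.sum_comm

lemma dotProduct_sum' {ι : Type*} (s : Finset ι) (x : Fin d × Fin d → ℂ)
    (f : ι → (Fin d × Fin d → ℂ)) : x ⬝ᵥ (∑ i ∈ s, f i) = ∑ i ∈ s, x ⬝ᵥ f i := by
  simp only [dotProduct, Finset.sum_apply, Finset.mul_sum]
  exact Finset.sum_comm

lemma projCB_eq (B : Fin d → Fin d → ℂ) :
    projCB d B = ∑ i, vecMulVec (vv d (B i)) (star (vv d (B i))) := by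
  unfold projCB
  refine Finset.sum_congr rfl fun i _ => ?_
  ext p q
  simp only [kroneckerMap_apply, vecMulVec_apply, vv, Pi.star_apply, star_mul', star_star]
  ring

lemma dot_vv (u w : Fin d → ℂ) :
    star (vv d u) ⬝ᵥ vv d w = (star u ⬝ᵥ w) * star (star u ⬝ᵥ w) := by
  simp only [dotProduct, vv, Pi.star_apply, star_mul', star_star, star_sum]
  rw [Fintype.sum_prod_type, Finset.sum_mul_sum]
  exact Finset.sum_congr rfl fun a _ => Finset.sum_congr rfl fun b _ => by ring

lemma dot_vv_Phi (u : Fin d → ℂ) :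
    star (vv d u) ⬝ᵥ PhiVec d = (rC d)⁻¹ * (star u ⬝ᵥ u) := by
  simp only [dotProduct, vv, PhiVec_eq, Pi.star_apply, star_mul', star_star,
    Fintype.sum_prod_type, mul_ite, mul_zero, Finset.sum_ite_eq, Finset.mem_univ, if_true,
    Finset.mul_sum]
  exact Finset.sum_congr rfl fun a _ => by ring

lemma dot_Phi_vv (w : Fin d → ℂ) :
    star (PhiVec d) ⬝ᵥ vv d w = (rC d)⁻¹ * star (star w ⬝ᵥ w) := by
  rw [star_PhiVec]
  simp only [dotProduct, vv, PhiVec_eq, star_sum, star_mul', star_star, Pi.star_apply,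
    Fintype.sum_prod_type, ite_mul, zero_mul, Finset.sum_ite_eq, Finset.mem_univ, if_true,
    Finset.mul_sum]

lemma Phi_dot_Phi (hd : 0 < d) : star (PhiVec d) ⬝ᵥ PhiVec d = 1 := by
  rw [star_PhiVec]
  simp only [dotProduct, PhiVec_eq, Fintype.sum_prod_type, ite_mul, zero_mul,
    Finset.sum_ite_eq, Finset.mem_univ, if_true, Finset.sum_const, Finset.card_univ,
    Fintype.card_fin, nsmul_eq_mul]
  rw [← mul_inv, rC_mul_rC]
  exact mul_inv_cancel₀ (by exact_mod_cast hd.ne')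

lemma colOrth {B : Fin d → Fin d → ℂ} (hB : IsONB d B) (a b : Fin d) :
    ∑ i, B i a * star (B i b) = if a = b then 1 else 0 := by
  classical
  set M : Matrix (Fin d) (Fin d) ℂ := Matrix.of B with hM
  have h1 : M * Mᴴ = 1 := by
    ext i j
    have := congrArg star (hB i j)
    simp only [dotProduct, star_sum, star_mul', star_star, Pi.star_apply] at this
    simp only [mul_apply, conjTranspose_apply, one_apply, hM, Matrix.of_apply]
    rw [this]
    split <;> simp
  have h2 : Mᴴ * M = 1 := mul_eq_one_comm.mp h1
  have := congrFun (congrFun h2 b) a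
  have h3 : ∑ i, star (B i b) * B i a = if b = a then 1 else 0 := by
    simpa [mul_apply, conjTranspose_apply, one_apply, hM] using this
  calc ∑ i, B i a * star (B i b) = ∑ i, star (B i b) * B i a :=
        Finset.sum_congr rfl fun i _ => mul_comm _ _
    _ = if b = a then 1 else 0 := h3
    _ = if a = b then 1 else 0 := by simp [eq_comm]

lemma sum_vv (hd : 0 < d) {B : Fin d → Fin d → ℂ} (hB : IsONB d B) :
    ∑ i, vv d (B i) = rC d • PhiVec d := by
  funext p
  have := colOrth hB p.1 p.2
  simp only [Finset.sum_apply, vv, PhiVec_eq, Pi.smul_apply, smul_eq_mul, this]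
  split
  · rw [mul_inv_cancel₀ (rC_ne_zero hd)]
  · rw [mul_zero]

end Aux

/-- (P(B₁)−|Φ⟩⟨Φ|)(P(B₂)−|Φ⟩⟨Φ|) = 0 iff B₁ and B₂ are mutually unbiased. -/
theorem stmt5 {d : ℕ} (hd : 0 < d) (B1 B2 : Fin d → Fin d → ℂ)
    (hB1 : IsONB d B1) (hB2 : IsONB d B2) :
    (projCB d B1 - PhiMat d) * (projCB d B2 - PhiMat d) = 0 ↔
      ∀ i j, ‖star (B1 i) ⬝ᵥ B2 j‖ ^ 2 = 1 / (d : ℝ) := by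
  classical
  have hdC : (d : ℂ) ≠ 0 := by exact_mod_cast hd.ne'
  have hrne := rC_ne_zero hd
  have hsum1 : ∑ i, vv d (B1 i) = rC d • PhiVec d := sum_vv hd hB1
  have hsum2 : ∑ j, vv d (B2 j) = rC d • PhiVec d := sum_vv hd hB2
  have hP1 : projCB d B1 * PhiMat d = PhiMat d := by
    rw [projCB_eq, PhiMat, Finset.sum_mul]
    have step : ∀ i : Fin d, vecMulVec (vv d (B1 i)) (star (vv d (B1 i))) *
        vecMulVec (PhiVec d) (star (PhiVec d))
        = (rC d)⁻¹ • vecMulVec (vv d (B1 i)) (star (PhiVec d)) := fun i => by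
      rw [vecMulVec_mul, dot_vv_Phi, hB1 i i, if_pos rfl, mul_one]
    rw [Finset.sum_congr rfl fun i _ => step i, ← Finset.smul_sum,
      sum_vecMulVec_left, hsum1, smul_vecMulVec, smul_smul,
      inv_mul_cancel₀ hrne, one_smul]
  have hP2 : PhiMat d * projCB d B2 = PhiMat d := by
    rw [projCB_eq, PhiMat, Finset.mul_sum]
    have step : ∀ j : Fin d, vecMulVec (PhiVec d) (star (PhiVec d)) *
        vecMulVec (vv d (B2 j)) (star (vv d (B2 j)))
        = (rC d)⁻¹ • vecMulVec (PhiVec d) (star (vv d (B2 j))) := fun j => by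
      rw [vecMulVec_mul, dot_Phi_vv, hB2 j j, if_pos rfl, star_one, mul_one]
    rw [Finset.sum_congr rfl fun j _ => step j, ← Finset.smul_sum,
      sum_vecMulVec_right, ← star_sum, hsum2, star_smul, star_rC, star_PhiVec,
      ← star_PhiVec, vecMulVec_smul_right, smul_smul, inv_mul_cancel₀ hrne, one_smul]
  have hPP : PhiMat d * PhiMat d = PhiMat d := by
    rw [PhiMat, vecMulVec_mul, Phi_dot_Phi hd, one_smul]
  have key : (projCB d B1 - PhiMat d) * (projCB d B2 - PhiMat d)
      = projCB d B1 * projCB d B2 - PhiMat d := by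
    rw [sub_mul, mul_sub, mul_sub, hP1, hP2, hPP]
    abel
  rw [key, sub_eq_zero]
  have hexp : projCB d B1 * projCB d B2
      = ∑ i, ∑ j, ((star (B1 i) ⬝ᵥ B2 j) * star (star (B1 i) ⬝ᵥ B2 j)) •
          vecMulVec (vv d (B1 i)) (star (vv d (B2 j))) := by
    rw [projCB_eq B1, projCB_eq B2, Finset.sum_mul]
    refine Finset.sum_congr rfl fun i _ => ?_
    rw [Finset.mul_sum]
    refine Finset.sum_congr rfl fun j _ => ?_
    rw [vecMulVec_mul, dot_vv]
  have hnormsq : ∀ i j, (star (B1 i) ⬝ᵥ B2 j) * star (star (B1 i) ⬝ᵥ B2 j)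
      = ((Complex.normSq (star (B1 i) ⬝ᵥ B2 j) : ℝ) : ℂ) := fun i j => by
    rw [Complex.star_def, Complex.mul_conj]
  constructor
  · intro hE i0 j0
    have hE' : projCB d B1 * projCB d B2 = PhiMat d := hE
    rw [hexp] at hE'
    have happ := congrArg (fun M => star (vv d (B1 i0)) ⬝ᵥ (M *ᵥ vv d (B2 j0))) hE'
    have h2j : ∀ j, star (vv d (B2 j)) ⬝ᵥ vv d (B2 j0) = if j = j0 then 1 else 0 := fun j => by
      rw [dot_vv, hB2 j j0]
      split <;> simp
    have h1i : ∀ i, star (vv d (B1 i0)) ⬝ᵥ vv d (B1 i) = if i0 = i then 1 else 0 := fun i => by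
      rw [dot_vv, hB1 i0 i]
      split <;> simp
    rw [PhiMat, mulVec_sum'] at happ
    simp only [mulVec_sum', Matrix.smul_mulVec, vecMulVec_mulVec, h2j,
      dotProduct_sum', dotProduct_smul, smul_eq_mul, h1i, mul_ite, ite_mul,
      mul_zero, zero_mul, mul_one, one_mul, Finset.sum_ite_eq, Finset.sum_ite_eq',
      Finset.mem_univ, if_true] at happ
    have hcol : (∑ x : Fin d, ∑ x_1 : Fin d, if i0 = x then
        if x_1 = j0 then (star (B1 x) ⬝ᵥ B2 x_1 * star (star (B1 x) ⬝ᵥ B2 x_1)) else 0 else 0)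
        = star (B1 i0) ⬝ᵥ B2 j0 * star (star (B1 i0) ⬝ᵥ B2 j0) := by
      rw [Fintype.sum_eq_single i0
          (fun x hx => Finset.sum_eq_zero fun y _ => if_neg (fun h => hx h.symm)),
        Fintype.sum_eq_single j0 (fun y hy => by simp [hy])]
      simp
    rw [hcol] at happ
    have hns : ((Complex.normSq (star (B1 i0) ⬝ᵥ B2 j0) : ℝ) : ℂ) = (((d : ℝ)⁻¹ : ℝ) : ℂ) := by
      rw [← hnormsq i0 j0, happ, dot_Phi_vv, dot_vv_Phi, hB1 i0 i0, hB2 j0 j0,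
        if_pos rfl, if_pos rfl, star_one, mul_one, ← mul_inv, rC_mul_rC]
      push_cast
      ring
    have hre := Complex.ofReal_inj.mp hns
    rw [Complex.sq_norm, hre, one_div]
  · intro hMUB
    have hs : ∀ i j, (star (B1 i) ⬝ᵥ B2 j) * star (star (B1 i) ⬝ᵥ B2 j) = (d : ℂ)⁻¹ := by
      intro i j
      rw [hnormsq i j, ← Complex.sq_norm, hMUB i j]
      push_cast
      ring
    rw [hexp]
    have inner : ∀ i : Fin d, ∑ j, ((star (B1 i) ⬝ᵥ B2 j) * star (star (B1 i) ⬝ᵥ B2 j)) •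
        vecMulVec (vv d (B1 i)) (star (vv d (B2 j)))
        = ((d : ℂ)⁻¹ * rC d) • vecMulVec (vv d (B1 i)) (star (PhiVec d)) := fun i => by
      rw [Finset.sum_congr rfl fun j _ => by rw [hs i j], ← Finset.smul_sum,
        sum_vecMulVec_right, ← star_sum, hsum2, star_smul, star_rC,
        vecMulVec_smul_right, smul_smul]
    rw [Finset.sum_congr rfl fun i _ => inner i, ← Finset.smul_sum,
      sum_vecMulVec_left, hsum1, _root_.smul_vecMulVec, smul_smul]
    rw [show (d : ℂ)⁻¹ * rC d * rC d = 1 by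
      rw [mul_assoc, rC_mul_rC, inv_mul_cancel₀ hdC], one_smul]
    rfl
end

section
/- Any separable positive semidefinite operator E on ℂ^d ⊗ ℂ^d satisfying E ≥ |Φ⟩⟨Φ| has trace at least d. In particular, any separable orthogonal projector P with P ≥ |Φ⟩⟨Φ| has rank at least d. -/
open Matrix
open scoped ComplexOrder

/- ### Auxiliary lemmas -/

lemma stmt9aux_conj_dot {n : Type*} [Fintype n] (a b : n → ℂ) :
    star a ⬝ᵥ b = star (star b ⬝ᵥ a) := by
  simp [dotProduct, Finset.sum_comm, mul_comm]

lemma stmt9aux_quad {n : Type*} [Fintype n] (a v : n → ℂ) :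
    star v ⬝ᵥ (Matrix.vecMulVec a (star a)) *ᵥ v = (star v ⬝ᵥ a) * star (star v ⬝ᵥ a) := by
  have h : star v ⬝ᵥ (Matrix.vecMulVec a (star a)) *ᵥ v
      = ∑ i, ∑ j, star (v i) * (a i * (star (a j) * v j)) := by
    simp [dotProduct, Matrix.mulVec, Matrix.vecMulVec_apply, Finset.mul_sum, mul_assoc]
  rw [h, ← stmt9aux_conj_dot, dotProduct, dotProduct, Finset.sum_mul_sum]
  refine Finset.sum_congr rfl fun i _ => Finset.sum_congr rfl fun j _ => ?_
  simp only [Pi.star_apply]; ring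

lemma stmt9aux_kron {n m : Type*} (a b : n → ℂ) (c e : m → ℂ) :
    Matrix.kroneckerMap (· * ·) (Matrix.vecMulVec a b) (Matrix.vecMulVec c e)
      = Matrix.vecMulVec (fun p : n × m => a p.1 * c p.2) (fun p => b p.1 * e p.2) := by
  ext ⟨i,k⟩ ⟨j,l⟩; simp [Matrix.kroneckerMap, Matrix.vecMulVec_apply]; ring

lemma stmt9aux_phi_dot_prod {d : ℕ} (a b : Fin d → ℂ) :
    star (PhiVec d) ⬝ᵥ (fun p : Fin d × Fin d => a p.1 * b p.2)
      = ((Real.sqrt d : ℝ) : ℂ)⁻¹ * ∑ i, a i * b i := by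
  simp only [dotProduct, PhiVec, Pi.star_apply, Fintype.sum_prod_type, apply_ite star, star_zero,
    star_inv₀, Complex.star_def, Complex.conj_ofReal, ite_mul, zero_mul]
  simp [Finset.mul_sum]

lemma stmt9aux_phi_dot_self {d : ℕ} (hd : 0 < d) :
    star (PhiVec d) ⬝ᵥ (PhiVec d) = 1 := by
  have hs : ((Real.sqrt d : ℝ) : ℂ)⁻¹ * ((Real.sqrt d : ℝ) : ℂ)⁻¹ = ((d:ℝ):ℂ)⁻¹ := by
    rw [← mul_inv, ← Complex.ofReal_mul, Real.mul_self_sqrt (Nat.cast_nonneg d)]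
  simp only [dotProduct, PhiVec, Pi.star_apply, Fintype.sum_prod_type, apply_ite star, star_zero,
    star_inv₀, Complex.star_def, Complex.conj_ofReal, ite_mul, zero_mul, mul_ite, mul_zero]
  simp only [Finset.sum_ite_eq, Finset.mem_univ, if_true, hs]
  simp only [Finset.sum_const, Finset.card_univ, Fintype.card_fin, nsmul_eq_mul]
  rw [← Complex.ofReal_natCast, ← Complex.ofReal_inv, ← Complex.ofReal_mul,
    mul_inv_cancel₀ (by positivity)]
  simp

set_option maxRecDepth 4000 in
lemma stmt9aux_cs {d : ℕ} (a b : Fin d → ℂ) :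
    Complex.normSq (∑ i, a i * b i) ≤ (∑ i, Complex.normSq (a i)) * (∑ i, Complex.normSq (b i)) := by
  let x : EuclideanSpace ℂ (Fin d) := (WithLp.equiv 2 _).symm (star a)
  let y : EuclideanSpace ℂ (Fin d) := (WithLp.equiv 2 _).symm b
  have hinner : (inner ℂ x y : ℂ) = ∑ i, a i * b i := by
    simp only [PiLp.inner_apply, RCLike.inner_apply, starRingEnd_apply]
    refine Finset.sum_congr rfl fun i _ => ?_
    show b i * star (star a i) = _
    simp [mul_comm]
  have hx : ‖x‖ ^ 2 = ∑ i, Complex.normSq (a i) := by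
    rw [EuclideanSpace.norm_eq, Real.sq_sqrt (by positivity)]
    refine Finset.sum_congr rfl fun i _ => ?_
    show ‖star (a i)‖ ^ 2 = _
    rw [norm_star, Complex.sq_norm]
  have hy : ‖y‖ ^ 2 = ∑ i, Complex.normSq (b i) := by
    rw [EuclideanSpace.norm_eq, Real.sq_sqrt (by positivity)]
    refine Finset.sum_congr rfl fun i _ => ?_
    show ‖b i‖ ^ 2 = _
    rw [Complex.sq_norm]
  have h := norm_inner_le_norm (𝕜 := ℂ) x y
  have h2 : ‖(inner ℂ x y : ℂ)‖ ^ 2 ≤ (‖x‖ * ‖y‖) ^ 2 :=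
    pow_le_pow_left₀ (norm_nonneg _) h 2
  rw [hinner, mul_pow, hx, hy] at h2
  calc Complex.normSq (∑ i, a i * b i) = ‖∑ i, a i * b i‖ ^ 2 := by
        rw [Complex.sq_norm]
    _ ≤ _ := h2

lemma stmt9aux_trace_eq_sum_eigs {n : Type*} [Fintype n] [DecidableEq n] {A : Matrix n n ℂ}
    (hA : A.IsHermitian) : A.trace = ∑ i, (hA.eigenvalues i : ℂ) := by
  nth_rewrite 1 [hA.spectral_theorem]
  rw [Unitary.conjStarAlgAut_apply, Matrix.trace_mul_cycle, Unitary.coe_star_mul_self, Matrix.one_mul, Matrix.trace_diagonal]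
  rfl

lemma stmt9aux_eig_01 {n : Type*} [Fintype n] [DecidableEq n] {A : Matrix n n ℂ}
    (hA : A.IsHermitian) (hP : A * A = A) (i : n) :
    hA.eigenvalues i = 0 ∨ hA.eigenvalues i = 1 := by
  set μ := hA.eigenvalues i with hμ
  set x := ⇑(hA.eigenvectorBasis i) with hx
  have hev : A *ᵥ x = (μ : ℂ) • x := by
    rw [hA.mulVec_eigenvectorBasis i]
    funext j
    show μ • (x j) = (μ : ℂ) * x j
    rw [Complex.real_smul]
  have h2 : A *ᵥ (A *ᵥ x) = ((μ : ℂ) * (μ : ℂ)) • x := by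
    rw [hev, Matrix.mulVec_smul, hev, smul_smul]
  rw [Matrix.mulVec_mulVec, hP, hev] at h2
  have hxne : x ≠ 0 := by
    have h0 := hA.eigenvectorBasis.orthonormal.ne_zero i
    intro h; apply h0; ext j; exact congrFun h j
  have hz : ((μ : ℂ) - (μ : ℂ) * (μ : ℂ)) • x = 0 := by
    rw [sub_smul, h2, sub_self]
  rcases smul_eq_zero.mp hz with h | h
  · have hr : μ - μ * μ = 0 := by exact_mod_cast h
    have hm : μ * (μ - 1) = 0 := by nlinarith
    rcases mul_eq_zero.mp hm with h' | h'
    · exact Or.inl h'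
    · exact Or.inr (by linarith)
  · exact absurd h hxne

lemma stmt9aux_lin {n : Type*} [Fintype n] {m : ℕ} (v : n → ℂ) (a : Fin m → ℂ)
    (M : Fin m → Matrix n n ℂ) :
    star v ⬝ᵥ (∑ j, a j • M j) *ᵥ v = ∑ j, a j * (star v ⬝ᵥ (M j) *ᵥ v) := by
  have h1 : (∑ j, a j • M j) *ᵥ v = ∑ j, a j • ((M j) *ᵥ v) := by
    funext p
    simp only [Matrix.mulVec, dotProduct, Matrix.sum_apply, Matrix.smul_apply, smul_eq_mul,
      Finset.sum_apply, Finset.sum_mul, Pi.smul_apply, Finset.mul_sum]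
    rw [Finset.sum_comm]
    exact Finset.sum_congr rfl fun j _ => Finset.sum_congr rfl fun q _ => by ring
  rw [h1]
  simp only [dotProduct, Finset.sum_apply, Pi.smul_apply, smul_eq_mul, Finset.mul_sum]
  rw [Finset.sum_comm]
  exact Finset.sum_congr rfl fun j _ => Finset.sum_congr rfl fun p _ => by ring

/-- any separable PSD operator E ≥ |Φ⟩⟨Φ| has trace at least d; in particular
any separable orthogonal projector P ≥ |Φ⟩⟨Φ| has rank at least d. -/
theorem stmt9 {d : ℕ} (hd : 0 < d)
    (E : Matrix (Fin d × Fin d) (Fin d × Fin d) ℂ)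
    (m : ℕ) (c : Fin m → ℝ) (hc : ∀ j, 0 ≤ c j)
    (φ χ : Fin m → Fin d → ℂ)
    (hE : E = ∑ j, (c j : ℂ) •
        Matrix.kroneckerMap (· * ·) (Matrix.vecMulVec (φ j) (star (φ j)))
          (Matrix.vecMulVec (χ j) (star (χ j))))
    (hge : (E - PhiMat d).PosSemidef) :
    (d : ℝ) ≤ E.trace.re ∧
    (E * E = E → E.IsHermitian → d ≤ E.rank) := by
  classical
  set v := PhiVec d with hv
  set κ : ℂ := ((Real.sqrt d : ℝ) : ℂ)⁻¹ with hκ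
  set s : Fin m → ℂ := fun j => ∑ i, φ j i * χ j i with hs
  set Nφ : Fin m → ℝ := fun j => ∑ i, Complex.normSq (φ j i) with hNφ
  set Nχ : Fin m → ℝ := fun j => ∑ i, Complex.normSq (χ j i) with hNχ
  -- each separable term is a rank-one vecMulVec
  set w : Fin m → (Fin d × Fin d → ℂ) := fun j p => φ j p.1 * χ j p.2 with hw
  have hstarw : ∀ j, (fun p : Fin d × Fin d => (star (φ j)) p.1 * (star (χ j)) p.2)
      = star (w j) := by
    intro j; funext p
    simp [hw, Pi.star_apply]
  have hkron : ∀ j, Matrix.kroneckerMap (· * ·) (Matrix.vecMulVec (φ j) (star (φ j)))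
      (Matrix.vecMulVec (χ j) (star (χ j))) = Matrix.vecMulVec (w j) (star (w j)) := by
    intro j
    rw [stmt9aux_kron, hstarw j]
  -- the quadratic form of E at v
  have hκs : ∀ j, star v ⬝ᵥ w j = κ * s j := fun j => stmt9aux_phi_dot_prod (φ j) (χ j)
  have hquadE : star v ⬝ᵥ E *ᵥ v = ∑ j, (c j : ℂ) * ((κ * s j) * star (κ * s j)) := by
    rw [hE, stmt9aux_lin]
    refine Finset.sum_congr rfl fun j _ => ?_
    rw [hkron j, stmt9aux_quad (w j) v, hκs j]
  have hκ2 : Complex.normSq κ = (d : ℝ)⁻¹ := by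
    rw [hκ, ← Complex.ofReal_inv, Complex.normSq_ofReal, ← mul_inv,
      Real.mul_self_sqrt (Nat.cast_nonneg d)]
  set q : ℝ := ∑ j, c j * ((d:ℝ)⁻¹ * Complex.normSq (s j)) with hq
  have hquadE' : star v ⬝ᵥ E *ᵥ v = ((q : ℝ) : ℂ) := by
    rw [hquadE, hq, Complex.ofReal_sum]
    refine Finset.sum_congr rfl fun j _ => ?_
    rw [show star (κ * s j) = (starRingEnd ℂ) (κ * s j) from rfl, Complex.mul_conj,
      Complex.normSq_mul, hκ2]
    push_cast
    ring
  -- quadratic form of PhiMat at v is 1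
  have hquadΦ : star v ⬝ᵥ (PhiMat d) *ᵥ v = 1 := by
    rw [PhiMat, ← hv, stmt9aux_quad v v, hv, stmt9aux_phi_dot_self hd]
    simp
  -- positivity gives 1 ≤ q
  have hpos := hge.dotProduct_mulVec_nonneg v
  rw [Matrix.sub_mulVec, dotProduct_sub, hquadE', hquadΦ,
    show ((q:ℝ):ℂ) - 1 = ((q - 1 : ℝ) : ℂ) by push_cast; ring] at hpos
  have hq1 : 1 ≤ q := by
    have h0 : (0:ℝ) ≤ q - 1 := by exact_mod_cast hpos
    linarith
  -- trace computation
  set T : ℝ := ∑ j, c j * (Nφ j * Nχ j) with hT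
  have htrE : E.trace = ((T : ℝ) : ℂ) := by
    rw [hE, Matrix.trace_sum, hT, Complex.ofReal_sum]
    refine Finset.sum_congr rfl fun j _ => ?_
    rw [Matrix.trace_smul, hkron j]
    have h1 : (Matrix.vecMulVec (w j) (star (w j))).trace
        = ((∑ p : Fin d × Fin d, Complex.normSq (w j p) : ℝ) : ℂ) := by
      rw [Matrix.trace, Complex.ofReal_sum]
      refine Finset.sum_congr rfl fun p _ => ?_
      simp only [Matrix.diag_apply, Matrix.vecMulVec_apply, Pi.star_apply]
      rw [show star (w j p) = (starRingEnd ℂ) (w j p) from rfl, Complex.mul_conj]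
    have h2 : ∑ p : Fin d × Fin d, Complex.normSq (w j p) = Nφ j * Nχ j := by
      rw [hNφ, hNχ, Finset.sum_mul_sum]
      rw [Fintype.sum_prod_type]
      refine Finset.sum_congr rfl fun a _ => Finset.sum_congr rfl fun b _ => ?_
      simp [hw, Complex.normSq_mul]
    rw [h1, h2, smul_eq_mul]
    push_cast
    ring
  have htrre : E.trace.re = T := by rw [htrE, Complex.ofReal_re]
  -- Cauchy-Schwarz per term and conclusion of part one
  have hd' : (0:ℝ) < d := by exact_mod_cast hd
  have hqT : q ≤ (d:ℝ)⁻¹ * T := by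
    rw [hq, hT, Finset.mul_sum]
    refine Finset.sum_le_sum fun j _ => ?_
    have hcs := stmt9aux_cs (φ j) (χ j)
    calc c j * ((d:ℝ)⁻¹ * Complex.normSq (s j))
        = (d:ℝ)⁻¹ * (c j * Complex.normSq (s j)) := by ring
      _ ≤ (d:ℝ)⁻¹ * (c j * (Nφ j * Nχ j)) := by
          apply mul_le_mul_of_nonneg_left _ (inv_nonneg.mpr hd'.le)
          exact mul_le_mul_of_nonneg_left hcs (hc j)
      _ = (d:ℝ)⁻¹ * (c j * (Nφ j * Nχ j)) := rfl
  have hdT : (d:ℝ) ≤ E.trace.re := by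
    rw [htrre]
    have h1 : (1:ℝ) ≤ (d:ℝ)⁻¹ * T := le_trans hq1 hqT
    have h2 := mul_le_mul_of_nonneg_left h1 hd'.le
    rw [mul_one, ← mul_assoc, mul_inv_cancel₀ hd'.ne', one_mul] at h2
    exact h2
  refine ⟨hdT, fun hP hH => ?_⟩
  -- part two: rank of a projector equals its trace
  have h01 := stmt9aux_eig_01 hH hP
  have htr2 : E.trace.re = ∑ i, hH.eigenvalues i := by
    rw [stmt9aux_trace_eq_sum_eigs hH, ← Complex.ofReal_sum, Complex.ofReal_re]
  have hsum_le : ∑ i, hH.eigenvalues i ≤ (Fintype.card {i // hH.eigenvalues i ≠ 0} : ℝ) := by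
    rw [Fintype.card_subtype]
    rw [← Finset.sum_filter_of_ne (fun i _ hne => hne)]
    calc ∑ i ∈ Finset.univ.filter (fun i => hH.eigenvalues i ≠ 0), hH.eigenvalues i
        ≤ ∑ _i ∈ Finset.univ.filter (fun i => hH.eigenvalues i ≠ 0), (1:ℝ) := by
          refine Finset.sum_le_sum fun i _ => ?_
          rcases h01 i with h | h <;> rw [h]
          · exact zero_le_one
      _ = _ := by simp
  have hrank : E.rank = Fintype.card {i // hH.eigenvalues i ≠ 0} := hH.rank_eq_card_non_zero_eigs
  have : (d:ℝ) ≤ (E.rank : ℝ) := by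
    rw [hrank]
    exact le_trans hdT (by rw [htr2] at *; exact le_trans (le_of_eq rfl) hsum_le)
  exact_mod_cast this
end

section
/- Let P be a rank-d separable orthogonal projector on ℂ^d ⊗ ℂ^d with P ≥ |Φ⟩⟨Φ|. Then there exists an orthonormal basis B of ℂ^d such that P = Σ_{ψ∈B}|ψ⟩⟨ψ|⊗|ψ*⟩⟨ψ*|. -/
open Matrix
open scoped ComplexOrder

section helpers
variable {n : Type*} [Fintype n] [DecidableEq n]

set_option linter.unusedSectionVars false

lemma myVecMulVec_mulVec (a b x : n → ℂ) :
    vecMulVec a b *ᵥ x = (b ⬝ᵥ x) • a := by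
  ext i
  simp [mulVec, vecMulVec_apply, dotProduct, Finset.mul_sum, mul_comm, mul_left_comm]

lemma myVecMulVec_mul (a b c e : n → ℂ) :
    vecMulVec a b * vecMulVec c e = (b ⬝ᵥ c) • vecMulVec a e := by
  ext i k
  simp [mul_apply, vecMulVec_apply, dotProduct, Finset.sum_mul, Finset.mul_sum]
  congr 1; ext j; ring

lemma myTrace_vecMulVec (a b : n → ℂ) : (vecMulVec a b).trace = a ⬝ᵥ b := by
  simp [Matrix.trace, Matrix.diag, vecMulVec_apply, dotProduct]

lemma myInner_equiv (a b : n → ℂ) :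
    (inner ℂ ((WithLp.equiv 2 (n → ℂ)).symm a) ((WithLp.equiv 2 (n → ℂ)).symm b) : ℂ) = star a ⬝ᵥ b := by
  rw [dotProduct_comm]; rfl

lemma myNorm_one (x : n → ℂ) (hx : star x ⬝ᵥ x = 1) :
    ‖((WithLp.equiv 2 (n → ℂ)).symm x)‖ = 1 := by
  have h : (inner ℂ ((WithLp.equiv 2 (n → ℂ)).symm x) ((WithLp.equiv 2 (n → ℂ)).symm x) : ℂ) = 1 := by
    rw [myInner_equiv]
    exact hx
  have h2 := inner_self_eq_norm_sq_to_K (𝕜 := ℂ) ((WithLp.equiv 2 (n → ℂ)).symm x)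
  rw [h] at h2
  have h3 : (‖((WithLp.equiv 2 (n → ℂ)).symm x)‖ : ℝ) ^ 2 = 1 := by
    have h4 : ((‖((WithLp.equiv 2 (n → ℂ)).symm x)‖ ^ 2 : ℝ) : ℂ) = 1 := by
      push_cast; exact h2.symm
    exact_mod_cast h4
  nlinarith [norm_nonneg ((WithLp.equiv 2 (n → ℂ)).symm x)]

lemma myCS_le (x y : n → ℂ) (hx : star x ⬝ᵥ x = 1) (hy : star y ⬝ᵥ y = 1) :
    ‖star x ⬝ᵥ y‖ ≤ 1 := by
  have := norm_inner_le_norm (𝕜 := ℂ) ((WithLp.equiv 2 (n → ℂ)).symm x) ((WithLp.equiv 2 (n → ℂ)).symm y)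
  rw [myNorm_one x hx, myNorm_one y hy, myInner_equiv] at this
  simpa using this

lemma myCS_eq (x y : n → ℂ) (hx : star x ⬝ᵥ x = 1) (hy : star y ⬝ᵥ y = 1)
    (h : ‖star x ⬝ᵥ y‖ = 1) :
    vecMulVec y (star y) = vecMulVec x (star x) := by
  have hxn := myNorm_one x hx
  have hyn := myNorm_one y hy
  have hx0 : ((WithLp.equiv 2 (n → ℂ)).symm x) ≠ 0 := by
    intro h0; rw [h0] at hxn; simp at hxn
  have hy0 : ((WithLp.equiv 2 (n → ℂ)).symm y) ≠ 0 := by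
    intro h0; rw [h0] at hyn; simp at hyn
  have hinner : ‖(inner ℂ ((WithLp.equiv 2 (n → ℂ)).symm x) ((WithLp.equiv 2 (n → ℂ)).symm y) : ℂ)‖
      = ‖((WithLp.equiv 2 (n → ℂ)).symm x)‖ * ‖((WithLp.equiv 2 (n → ℂ)).symm y)‖ := by
    rw [hxn, hyn, myInner_equiv]
    simpa using h
  obtain ⟨r, hr0, hry⟩ := (norm_inner_eq_norm_iff hx0 hy0).mp hinner
  have hyx : y = fun i => r * x i := by
    funext i; exact congrArg (fun z : WithLp 2 (n → ℂ) => WithLp.ofLp z i) hry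
  have hr1 : r * (starRingEnd ℂ) r = 1 := by
    have := hy
    rw [hyx] at this
    simp only [dotProduct, Pi.star_apply, Pi.smul_apply, star_mul'] at this
    have h2 : (starRingEnd ℂ) r * r * (star x ⬝ᵥ x) = 1 := by
      rw [← this]; simp [dotProduct, Finset.mul_sum]; congr 1; ext j; ring
    rw [hx, mul_one] at h2
    linear_combination h2
  ext i k
  rw [hyx]
  simp only [vecMulVec_apply, Pi.star_apply]
  show r * x i * star (r * x k) = x i * star (x k)
  simp only [star_mul', Complex.star_def]
  linear_combination x i * (starRingEnd ℂ) (x k) * hr1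

lemma myTrace_eq_rank (P : Matrix n n ℂ) (hH : P.IsHermitian) (hproj : P * P = P) :
    P.trace = (P.rank : ℂ) := by
  have heig : ∀ i, hH.eigenvalues i = 0 ∨ hH.eigenvalues i = 1 := by
    intro i
    set v := ⇑(hH.eigenvectorBasis i) with hv
    have hv0 : v ≠ 0 := by
      have := hH.eigenvectorBasis.orthonormal.ne_zero i
      exact fun h => this (by ext j; exact congrFun h j)
    have h1 : P *ᵥ v = hH.eigenvalues i • v := hH.mulVec_eigenvectorBasis i
    have h2 : P *ᵥ (P *ᵥ v) = hH.eigenvalues i • (hH.eigenvalues i • v) := by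
      rw [h1, mulVec_smul, h1]
    rw [mulVec_mulVec, hproj, h1] at h2
    obtain ⟨j, hj⟩ : ∃ j, v j ≠ 0 := by
      by_contra h; push_neg at h; exact hv0 (funext h)
    have h3 := congrFun h2 j
    simp only [Pi.smul_apply, smul_eq_mul, Complex.real_smul] at h3
    have h4 : ((hH.eigenvalues i : ℂ) - (hH.eigenvalues i : ℂ)^2) * v j = 0 := by
      push_cast at h3 ⊢; linear_combination h3
    rcases mul_eq_zero.mp h4 with h5 | h5
    · have h6 : (hH.eigenvalues i : ℂ) * (1 - (hH.eigenvalues i : ℂ)) = 0 := by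
        linear_combination h5
      rcases mul_eq_zero.mp h6 with h7 | h7
      · left; exact_mod_cast h7
      · right
        have : (hH.eigenvalues i : ℂ) = 1 := by linear_combination -h7
        exact_mod_cast this
    · exact absurd h5 hj
  have htr : P.trace = ∑ i, (hH.eigenvalues i : ℂ) := by
    exact hH.trace_eq_sum_eigenvalues
  rw [htr, hH.rank_eq_card_non_zero_eigs]
  rw [← Finset.sum_filter_ne_zero]
  have : ∀ i ∈ Finset.univ.filter (fun i => (hH.eigenvalues i : ℂ) ≠ 0),
      (hH.eigenvalues i : ℂ) = 1 := by
    intro i hi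
    rcases heig i with h | h
    · exfalso; exact (Finset.mem_filter.mp hi).2 (by exact_mod_cast h)
    · exact_mod_cast h
  rw [Finset.sum_congr rfl this, Finset.sum_const, nsmul_eq_mul, mul_one]
  norm_cast
  rw [Fintype.card_subtype]

lemma mySum_mulVec {ι : Type*} (s : Finset ι) (f : ι → Matrix n n ℂ) (x : n → ℂ) :
    (∑ j ∈ s, f j) *ᵥ x = ∑ j ∈ s, f j *ᵥ x := by
  ext i
  simp only [mulVec, dotProduct, Matrix.sum_apply, Finset.sum_apply, Finset.sum_mul]
  exact Finset.sum_comm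

lemma myDotProduct_sum {ι : Type*} (s : Finset ι) (a : n → ℂ) (v : ι → n → ℂ) :
    a ⬝ᵥ (∑ j ∈ s, v j) = ∑ j ∈ s, a ⬝ᵥ v j := by
  simp only [dotProduct, Finset.sum_apply, Finset.mul_sum]
  exact Finset.sum_comm

end helpers

set_option maxHeartbeats 1600000 in
/-- a rank-d separable orthogonal projector P ≥ |Φ⟩⟨Φ| is of the form
P = Σ_{ψ∈B} |ψ⟩⟨ψ|⊗|ψ*⟩⟨ψ*| for some orthonormal basis B of ℂ^d. -/
theorem stmt10 {d : ℕ} (hd : 0 < d)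
    (P : Matrix (Fin d × Fin d) (Fin d × Fin d) ℂ)
    (hPherm : P.IsHermitian) (hPproj : P * P = P) (hPrank : P.rank = d)
    (m : ℕ) (c : Fin m → ℝ) (hc : ∀ j, 0 < c j)
    (φ χ : Fin m → Fin d → ℂ)
    (hφ : ∀ j, star (φ j) ⬝ᵥ φ j = 1) (hχ : ∀ j, star (χ j) ⬝ᵥ χ j = 1)
    (hP : P = ∑ j, (c j : ℂ) •
        Matrix.kroneckerMap (· * ·) (Matrix.vecMulVec (φ j) (star (φ j)))
          (Matrix.vecMulVec (χ j) (star (χ j))))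
    (hge : (P - PhiMat d).PosSemidef) :
    ∃ B : Fin d → Fin d → ℂ, IsONB d B ∧ P = projCB d B := by
  classical
  have hd0 : (0:ℝ) < d := by exact_mod_cast hd
  set c0 : ℂ := ((Real.sqrt d : ℝ) : ℂ)⁻¹ with hc0def
  have hsq : (0:ℝ) < Real.sqrt d := Real.sqrt_pos.mpr hd0
  have hc0ne : c0 ≠ 0 := by
    simp only [hc0def, ne_eq, inv_eq_zero, Complex.ofReal_eq_zero]
    exact hsq.ne'
  have hdC : (d:ℂ) ≠ 0 := by exact_mod_cast hd.ne'
  have hcc : c0 * c0 = (d:ℂ)⁻¹ := by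
    rw [hc0def, ← mul_inv, ← Complex.ofReal_mul, Real.mul_self_sqrt hd0.le]
    push_cast
    ring
  have hPhiApp : ∀ p : Fin d × Fin d, PhiVec d p = if p.1 = p.2 then c0 else 0 := fun p => rfl
  have hc0conj : (starRingEnd ℂ) c0 = c0 := by
    rw [hc0def, ← Complex.ofReal_inv, Complex.conj_ofReal]
  -- dot products with Φ
  have hdotPhi : ∀ (u : Fin d × Fin d → ℂ),
      star (PhiVec d) ⬝ᵥ u = c0 * ∑ a, u (a, a) := by
    intro u
    simp only [dotProduct, Pi.star_apply, PhiVec, Fintype.sum_prod_type]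
    rw [Finset.mul_sum]
    refine Finset.sum_congr rfl fun a _ => ?_
    rw [Finset.sum_eq_single a]
    · simp [hc0conj]; exact Or.inl hc0def.symm
    · intro b _ hb; simp [Ne.symm hb]
    · simp
  have hdotPhi' : ∀ (u : Fin d × Fin d → ℂ),
      star u ⬝ᵥ PhiVec d = c0 * ∑ a, (starRingEnd ℂ) (u (a, a)) := by
    intro u
    simp only [dotProduct, Pi.star_apply, PhiVec, Fintype.sum_prod_type]
    rw [Finset.mul_sum]
    refine Finset.sum_congr rfl fun a _ => ?_
    rw [Finset.sum_eq_single a]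
    · simp [mul_comm]; exact Or.inl hc0def.symm
    · intro b _ hb; simp [Ne.symm hb]
    · simp
  have hΦnorm : star (PhiVec d) ⬝ᵥ PhiVec d = 1 := by
    rw [hdotPhi]
    have hsum : (∑ a : Fin d, PhiVec d (a, a)) = (d:ℂ) * c0 := by
      have h1 : ∀ a : Fin d, PhiVec d (a,a) = c0 := fun a => by simp [hPhiApp]
      rw [Finset.sum_congr rfl (fun a _ => h1 a), Finset.sum_const, Finset.card_univ,
        Fintype.card_fin, nsmul_eq_mul]
    rw [hsum, show c0 * ((d:ℂ) * c0) = (d:ℂ) * (c0 * c0) by ring, hcc,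
      mul_inv_cancel₀ hdC]
  -- Step A : P *ᵥ Φ = Φ
  have hPM : PhiMat d *ᵥ PhiVec d = PhiVec d := by
    rw [PhiMat, myVecMulVec_mulVec, hΦnorm, one_smul]
  have hsub : (1 : Matrix (Fin d × Fin d) (Fin d × Fin d) ℂ) - P
      = ((1 : Matrix (Fin d × Fin d) (Fin d × Fin d) ℂ) - P)ᴴ
        * ((1 : Matrix (Fin d × Fin d) (Fin d × Fin d) ℂ) - P) := by
    rw [conjTranspose_sub, conjTranspose_one, hPherm.eq]
    simp only [mul_sub, sub_mul, one_mul, mul_one, hPproj]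
    abel
  have h1P : Matrix.PosSemidef ((1 : Matrix (Fin d × Fin d) (Fin d × Fin d) ℂ) - P) := by
    rw [hsub]; exact posSemidef_conjTranspose_mul_self _
  set q : ℂ := star (PhiVec d) ⬝ᵥ (P *ᵥ PhiVec d) with hqdef
  have hq_ge : 0 ≤ q - 1 := by
    have := hge.dotProduct_mulVec_nonneg (PhiVec d)
    rwa [sub_mulVec, dotProduct_sub, hPM, hΦnorm] at this
  have hq_le : 0 ≤ 1 - q := by
    have := h1P.dotProduct_mulVec_nonneg (PhiVec d)
    rwa [sub_mulVec, one_mulVec, dotProduct_sub, hΦnorm] at this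
  have hq1 : q = 1 := by
    have hle : q ≤ 1 := sub_nonneg.mp hq_le
    have hge' : 1 ≤ q := sub_nonneg.mp hq_ge
    exact le_antisymm hle hge'
  have hNPhi : ((1 : Matrix (Fin d × Fin d) (Fin d × Fin d) ℂ) - P) *ᵥ PhiVec d = 0 := by
    have h0 : star (PhiVec d) ⬝ᵥ (((1 : Matrix (Fin d × Fin d) (Fin d × Fin d) ℂ) - P) *ᵥ PhiVec d) = 0 := by
      rw [sub_mulVec, one_mulVec, dotProduct_sub, hΦnorm, ← hqdef, hq1, sub_self]
    rw [hsub, ← mulVec_mulVec, dotProduct_mulVec, ← star_mulVec] at h0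
    exact dotProduct_star_self_eq_zero.mp h0
  have hPΦ : P *ᵥ PhiVec d = PhiVec d := by
    have := hNPhi
    rw [sub_mulVec, one_mulVec, sub_eq_zero] at this
    exact this.symm
  -- Step B : product vectors and kronecker structure
  set v : Fin m → (Fin d × Fin d → ℂ) := fun j p => φ j p.1 * χ j p.2 with hvdef
  have hK : ∀ j, Matrix.kroneckerMap (· * ·) (vecMulVec (φ j) (star (φ j)))
      (vecMulVec (χ j) (star (χ j))) = vecMulVec (v j) (star (v j)) := by
    intro j
    ext ⟨i, i'⟩ ⟨k, k'⟩
    simp only [kroneckerMap_apply, vecMulVec_apply, Pi.star_apply, hvdef, star_mul']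
    ring
  set s : Fin m → ℂ := fun j => ∑ a, χ j a * φ j a with hsdef
  have hvdiag : ∀ j, (∑ a, v j (a,a)) = s j := by
    intro j; simp only [hvdef, hsdef]; exact Finset.sum_congr rfl fun a _ => mul_comm _ _
  have hPmulΦ : P *ᵥ PhiVec d = ∑ j, ((c j : ℂ) * (c0 * (starRingEnd ℂ) (s j))) • v j := by
    rw [hP, mySum_mulVec]
    refine Finset.sum_congr rfl fun j _ => ?_
    rw [smul_mulVec, hK j, myVecMulVec_mulVec, hdotPhi' (v j),
      show (∑ a, (starRingEnd ℂ) (v j (a,a))) = (starRingEnd ℂ) (s j) by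
        rw [← map_sum, hvdiag], smul_smul]
  have hqexp : q = ∑ j, (c j : ℂ) * (Complex.normSq (s j) : ℂ) * (c0 * c0) := by
    rw [hqdef, hPmulΦ, myDotProduct_sum]
    refine Finset.sum_congr rfl fun j _ => ?_
    rw [dotProduct_smul, hdotPhi (v j), hvdiag, smul_eq_mul,
      show (Complex.normSq (s j):ℂ) = s j * (starRingEnd ℂ) (s j) from (Complex.mul_conj _).symm]
    ring
  have hE1C : ∑ j, (c j : ℂ) * (Complex.normSq (s j) : ℂ) = (d : ℂ) := by
    have h := hqexp
    rw [hq1, ← Finset.sum_mul, hcc] at h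
    field_simp at h
    linear_combination -h
  have hE1R : ∑ j, c j * Complex.normSq (s j) = (d : ℝ) := by
    have h : ((∑ j, c j * Complex.normSq (s j) : ℝ) : ℂ) = ((d:ℝ) : ℂ) := by
      push_cast
      exact hE1C
    exact_mod_cast h
  -- Step C : trace
  have htrP : P.trace = (d : ℂ) := by
    rw [myTrace_eq_rank P hPherm hPproj, hPrank]
  have hE2C : ∑ j, (c j : ℂ) = (d : ℂ) := by
    have h := htrP
    rw [hP, trace_sum] at h
    rw [← h]
    refine (Finset.sum_congr rfl fun j _ => ?_).symm
    rw [trace_smul, hK j, myTrace_vecMulVec]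
    have h1 : v j ⬝ᵥ star (v j)
        = (∑ a, φ j a * (starRingEnd ℂ) (φ j a)) * (∑ b, χ j b * (starRingEnd ℂ) (χ j b)) := by
      rw [Finset.sum_mul_sum]
      simp only [dotProduct, hvdef, Pi.star_apply, Fintype.sum_prod_type, star_mul']
      refine Finset.sum_congr rfl fun a _ => Finset.sum_congr rfl fun b _ => ?_
      show φ j a * χ j b * ((starRingEnd ℂ) (φ j a) * (starRingEnd ℂ) (χ j b)) = _
      ring
    have h2 : (∑ a, φ j a * (starRingEnd ℂ) (φ j a)) = 1 := by
      rw [← hφ j]; exact Finset.sum_congr rfl fun a _ => mul_comm _ _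
    have h3 : (∑ b, χ j b * (starRingEnd ℂ) (χ j b)) = 1 := by
      rw [← hχ j]; exact Finset.sum_congr rfl fun b _ => mul_comm _ _
    rw [h1, h2, h3, mul_one, smul_eq_mul, mul_one]
  have hE2R : ∑ j, c j = (d : ℝ) := by
    have h : ((∑ j, c j : ℝ) : ℂ) = ((d:ℝ) : ℂ) := by push_cast; exact hE2C
    exact_mod_cast h
  -- Step D : |s j| = 1
  have hsle : ∀ j, Complex.normSq (s j) ≤ 1 := by
    intro j
    have hx : star (star (χ j)) ⬝ᵥ (star (χ j)) = 1 := by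
      rw [star_star, ← hχ j]
      simp only [dotProduct, Pi.star_apply]
      exact Finset.sum_congr rfl fun a _ => mul_comm _ _
    have h := myCS_le (star (χ j)) (φ j) hx (hφ j)
    rw [star_star] at h
    have habs : ‖s j‖ ≤ 1 := h
    nlinarith [Complex.sq_norm (s j), norm_nonneg (s j)]
  have hs1 : ∀ j, Complex.normSq (s j) = 1 := by
    have hzero : ∑ j, c j * (1 - Complex.normSq (s j)) = 0 := by
      have h : ∑ j, c j * (1 - Complex.normSq (s j))
          = (∑ j, c j) - ∑ j, c j * Complex.normSq (s j) := by
        rw [← Finset.sum_sub_distrib]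
        exact Finset.sum_congr rfl fun j _ => by ring
      rw [h, hE2R, hE1R, sub_self]
    intro j
    have hterm := (Finset.sum_eq_zero_iff_of_nonneg (fun j _ =>
      mul_nonneg (hc j).le (by linarith [hsle j]))).mp hzero j (Finset.mem_univ j)
    rcases mul_eq_zero.mp hterm with h | h
    · exact absurd h (hc j).ne'
    · linarith
  -- Step E : χ structure
  have hB : ∀ j, vecMulVec (χ j) (star (χ j)) = vecMulVec (star (φ j)) (φ j) := by
    intro j
    have hx : star (star (χ j)) ⬝ᵥ (star (χ j)) = 1 := by
      rw [star_star, ← hχ j]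
      simp only [dotProduct, Pi.star_apply]
      exact Finset.sum_congr rfl fun a _ => mul_comm _ _
    have habs : ‖star (star (χ j)) ⬝ᵥ φ j‖ = 1 := by
      rw [star_star]
      show ‖s j‖ = 1
      have h2 : ‖s j‖ ^ 2 = 1 := by rw [Complex.sq_norm, hs1 j]
      have h3 : (‖s j‖ - 1) * (‖s j‖ + 1) = 0 := by
        linear_combination h2
      rcases mul_eq_zero.mp h3 with h4 | h4
      · linarith
      · nlinarith [norm_nonneg (s j)]
    have hout := myCS_eq (star (χ j)) (φ j) hx (hφ j) habs
    rw [star_star] at hout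
    ext i k
    have h := congrFun (congrFun hout k) i
    simp only [vecMulVec_apply, Pi.star_apply] at h ⊢
    linear_combination -h
  -- Step F : M = 1
  set A : Fin m → Matrix (Fin d) (Fin d) ℂ := fun j => vecMulVec (φ j) (star (φ j)) with hAdef
  set G : Matrix (Fin d) (Fin d) ℂ → Matrix (Fin d × Fin d) (Fin d × Fin d) ℂ :=
    fun X => Matrix.kroneckerMap (· * ·) X Xᵀ with hGdef
  have hT : ∀ (ψ : Fin d → ℂ), vecMulVec (star ψ) ψ = (vecMulVec ψ (star ψ))ᵀ := by
    intro ψ; ext i k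
    simp only [vecMulVec_apply, transpose_apply, Pi.star_apply]
    ring
  have hP3 : P = ∑ j, (c j : ℂ) • G (A j) := by
    rw [hP]
    exact Finset.sum_congr rfl fun j _ => by rw [hB j, hT (φ j)]
  have hAidem : ∀ j, A j * A j = A j := by
    intro j
    show vecMulVec (φ j) (star (φ j)) * vecMulVec (φ j) (star (φ j)) = _
    rw [myVecMulVec_mul, hφ j, one_smul]
  have hGAΦ : ∀ j, (G (A j)) *ᵥ PhiVec d = fun p => c0 * A j p.1 p.2 := by
    intro j
    funext p
    obtain ⟨i, i'⟩ := p
    show ∑ q : Fin d × Fin d, (G (A j)) (i,i') q * PhiVec d q = _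
    rw [Fintype.sum_prod_type]
    have hinner : ∀ k, (∑ k', (G (A j)) (i,i') (k,k') * PhiVec d (k,k'))
        = A j i k * A j k i' * c0 := by
      intro k
      rw [Finset.sum_eq_single k]
      · simp only [hGdef, kroneckerMap_apply, transpose_apply, hPhiApp]
        norm_num
      · intro b _ hb
        simp only [hPhiApp]
        rw [if_neg (Ne.symm hb), mul_zero]
      · intro h; exact absurd (Finset.mem_univ k) h
    rw [Finset.sum_congr rfl (fun k _ => hinner k)]
    have : (∑ k, A j i k * A j k i' * c0) = (A j * A j) i i' * c0 := by
      rw [mul_apply, Finset.sum_mul]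
    rw [this, hAidem j, mul_comm]
  have hM1 : ∑ j, (c j : ℂ) • A j = 1 := by
    have h := hPΦ
    rw [hP3, mySum_mulVec] at h
    ext i i'
    have h2 := congrFun h (i, i')
    rw [Finset.sum_apply] at h2
    have h3 : ∑ j, (c j : ℂ) * (c0 * A j i i') = PhiVec d (i,i') := by
      rw [← h2]
      refine Finset.sum_congr rfl fun j _ => ?_
      rw [smul_mulVec, hGAΦ j]
      simp only [Pi.smul_apply, smul_eq_mul]
    have h4 : c0 * ∑ j, (c j : ℂ) * A j i i' = c0 * (if i = i' then 1 else 0) := by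
      rw [Finset.mul_sum]
      rw [show (c0 * if i = i' then (1:ℂ) else 0) = PhiVec d (i,i') by
        rw [hPhiApp]; split <;> simp]
      rw [← h3]
      exact Finset.sum_congr rfl fun j _ => by ring
    have h5 := mul_left_cancel₀ hc0ne h4
    rw [Matrix.sum_apply]
    simp only [Matrix.smul_apply, smul_eq_mul]
    rw [h5, Matrix.one_apply]
  -- Step G : Gram structure
  set g : Fin m → Fin m → ℂ := fun j k => star (φ j) ⬝ᵥ φ k with hgdef
  have hgc : ∀ j k, g k j = (starRingEnd ℂ) (g j k) := by
    intro j k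
    show star (φ k) ⬝ᵥ φ j = (starRingEnd ℂ) (star (φ j) ⬝ᵥ φ k)
    simp only [dotProduct, map_sum]
    refine Finset.sum_congr rfl fun a _ => ?_
    simp only [Pi.star_apply, Complex.star_def, _root_.map_mul, Complex.conj_conj]
    ring
  have hgmul : ∀ j k, g j k * g k j = (Complex.normSq (g j k) : ℂ) := by
    intro j k; rw [hgc j k, Complex.mul_conj]
  have habs_one : ∀ z : ℂ, Complex.normSq z = 1 → ‖z‖ = 1 := by
    intro z h
    have h2 : ‖z‖ ^ 2 = 1 := by rw [Complex.sq_norm, h]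
    have h3 : (‖z‖ - 1) * (‖z‖ + 1) = 0 := by linear_combination h2
    rcases mul_eq_zero.mp h3 with h4 | h4
    · linarith
    · nlinarith [norm_nonneg z]
  have hgnorm_le : ∀ j k, Complex.normSq (g j k) ≤ 1 := by
    intro j k
    have h := myCS_le (φ j) (φ k) (hφ j) (hφ k)
    have h2 : ‖g j k‖ ≤ 1 := h
    nlinarith [Complex.sq_norm (g j k), norm_nonneg (g j k)]
  have hAmulVec : ∀ j k, A j *ᵥ φ k = g j k • φ j := by
    intro j k
    show vecMulVec (φ j) (star (φ j)) *ᵥ φ k = _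
    rw [myVecMulVec_mulVec]
  have hE3C : ∀ k, ∑ j, (c j : ℂ) * (Complex.normSq (g j k) : ℂ) = 1 := by
    intro k
    have h := congrArg (fun M => star (φ k) ⬝ᵥ (M *ᵥ φ k)) hM1
    rw [mySum_mulVec, myDotProduct_sum, one_mulVec, hφ k] at h
    rw [← h]
    refine Finset.sum_congr rfl fun j _ => ?_
    rw [smul_mulVec, hAmulVec j k, dotProduct_smul, dotProduct_smul,
      smul_eq_mul, smul_eq_mul, show star (φ k) ⬝ᵥ φ j = g k j from rfl, ← hgmul j k]
  have hE3R : ∀ k, ∑ j, c j * Complex.normSq (g j k) = 1 := by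
    intro k
    have h : ((∑ j, c j * Complex.normSq (g j k) : ℝ) : ℂ) = ((1:ℝ) : ℂ) := by
      push_cast; exact hE3C k
    exact_mod_cast h
  have hE4R : ∑ j, ∑ k, (c j * c k) * Complex.normSq (g j k) = (d : ℝ) := by
    rw [Finset.sum_comm]
    have h : ∀ k, ∑ j, (c j * c k) * Complex.normSq (g j k)
        = c k * ∑ j, c j * Complex.normSq (g j k) := by
      intro k; rw [Finset.mul_sum]; exact Finset.sum_congr rfl fun j _ => by ring
    rw [Finset.sum_congr rfl fun k _ => h k]
    rw [Finset.sum_congr rfl fun k (_ : k ∈ Finset.univ) => by rw [hE3R k, mul_one]]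
    exact hE2R
  -- trace of P * P
  have hGmul : ∀ j k, G (A j) * G (A k)
      = Matrix.kroneckerMap (· * ·) (A j * A k) ((A k * A j)ᵀ) := by
    intro j k
    ext ⟨i, i'⟩ ⟨l, l'⟩
    simp only [hGdef, mul_apply, kroneckerMap_apply, transpose_apply, Fintype.sum_prod_type]
    rw [Finset.sum_mul_sum]
    refine Finset.sum_congr rfl fun a _ => Finset.sum_congr rfl fun b _ => ?_
    ring
  have myTrace_kron : ∀ (M N : Matrix (Fin d) (Fin d) ℂ),
      (Matrix.kroneckerMap (· * ·) M N).trace = M.trace * N.trace := by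
    intro M N
    simp only [Matrix.trace, Matrix.diag, kroneckerMap_apply, Fintype.sum_prod_type]
    rw [Finset.sum_mul_sum]
  have htraceAA : ∀ j k, (A j * A k).trace = (Complex.normSq (g j k) : ℂ) := by
    intro j k
    have h1 : A j * A k = g j k • vecMulVec (φ j) (star (φ k)) := by
      show vecMulVec (φ j) (star (φ j)) * vecMulVec (φ k) (star (φ k)) = _
      rw [myVecMulVec_mul]
    rw [h1, trace_smul, myTrace_vecMulVec, smul_eq_mul,
      show φ j ⬝ᵥ star (φ k) = g k j from Finset.sum_congr rfl fun a _ => mul_comm _ _,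
      hgmul j k]
  have hE5C : ∑ j, ∑ k, ((c j : ℂ) * (c k : ℂ)) * ((Complex.normSq (g j k) : ℂ))^2 = (d:ℂ) := by
    have hPP : P * P = ∑ j, ∑ k, ((c j:ℂ) * (c k:ℂ)) • (G (A j) * G (A k)) := by
      rw [hP3, Finset.sum_mul_sum]
      refine Finset.sum_congr rfl fun j _ => Finset.sum_congr rfl fun k _ => ?_
      rw [Matrix.smul_mul, Matrix.mul_smul, smul_smul]
    have h := htrP
    rw [← hPproj, hPP, trace_sum] at h
    rw [← h]
    refine (Finset.sum_congr rfl fun j _ => ?_).symm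
    rw [trace_sum]
    refine Finset.sum_congr rfl fun k _ => ?_
    rw [trace_smul, hGmul j k, myTrace_kron, trace_transpose, htraceAA j k,
      htraceAA k j, smul_eq_mul, show Complex.normSq (g k j) = Complex.normSq (g j k) by
        rw [hgc j k, Complex.normSq_conj], sq]
  have hE5R : ∑ j, ∑ k, (c j * c k) * (Complex.normSq (g j k))^2 = (d : ℝ) := by
    have h : ((∑ j, ∑ k, (c j * c k) * (Complex.normSq (g j k))^2 : ℝ) : ℂ) = ((d:ℝ) : ℂ) := by
      push_cast; exact hE5C
    exact_mod_cast h
  -- zero-one law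
  have hzero2 : ∀ j k, Complex.normSq (g j k) = 0 ∨ Complex.normSq (g j k) = 1 := by
    have hzero : ∑ j, ∑ k, (c j * c k) * (Complex.normSq (g j k) * (1 - Complex.normSq (g j k))) = 0 := by
      have h : ∑ j, ∑ k, (c j * c k) * (Complex.normSq (g j k) * (1 - Complex.normSq (g j k)))
          = (∑ j, ∑ k, (c j * c k) * Complex.normSq (g j k))
            - ∑ j, ∑ k, (c j * c k) * (Complex.normSq (g j k))^2 := by
        rw [← Finset.sum_sub_distrib]
        refine Finset.sum_congr rfl fun j _ => ?_
        rw [← Finset.sum_sub_distrib]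
        exact Finset.sum_congr rfl fun k _ => by ring
      rw [h, hE4R, hE5R, sub_self]
    intro j k
    have hnn : ∀ j k : Fin m, 0 ≤ (c j * c k) * (Complex.normSq (g j k) * (1 - Complex.normSq (g j k))) := by
      intro j k
      apply mul_nonneg (mul_nonneg (hc j).le (hc k).le)
      apply mul_nonneg (Complex.normSq_nonneg _)
      linarith [hgnorm_le j k]
    have houter := (Finset.sum_eq_zero_iff_of_nonneg (fun j _ =>
      Finset.sum_nonneg (fun k _ => hnn j k))).mp hzero j (Finset.mem_univ j)
    have hterm := (Finset.sum_eq_zero_iff_of_nonneg (fun k _ => hnn j k)).mp houter k (Finset.mem_univ k)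
    rcases mul_eq_zero.mp hterm with h | h
    · exact absurd h (mul_pos (hc j) (hc k)).ne'
    · rcases mul_eq_zero.mp h with h2 | h2
      · exact Or.inl h2
      · exact Or.inr (by linarith)
  -- Step H : orthogonal or equal
  have hA_or : ∀ j k, g j k = 0 ∨ A j = A k := by
    intro j k
    rcases hzero2 j k with h | h
    · exact Or.inl (Complex.normSq_eq_zero.mp h)
    · right
      have habs : ‖star (φ j) ⬝ᵥ φ k‖ = 1 := habs_one _ h
      exact (myCS_eq (φ j) (φ k) (hφ j) (hφ k) habs).symm
  -- Step I : representatives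
  set rep : Fin m → Fin m := fun j => (Finset.univ.filter (fun k => A k = A j)).min'
    ⟨j, Finset.mem_filter.mpr ⟨Finset.mem_univ j, rfl⟩⟩ with hrepdef
  have hmin_eq : ∀ (s t : Finset (Fin m)) (hs : s.Nonempty) (ht : t.Nonempty),
      s = t → s.min' hs = t.min' ht := by
    rintro s t hs ht rfl; rfl
  have hArep : ∀ j, A (rep j) = A j := by
    intro j
    have h := Finset.min'_mem (Finset.univ.filter (fun k => A k = A j))
      ⟨j, Finset.mem_filter.mpr ⟨Finset.mem_univ j, rfl⟩⟩
    exact (Finset.mem_filter.mp h).2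
  have hrep_eq : ∀ j k, A j = A k → rep j = rep k := by
    intro j k h
    rw [hrepdef]
    exact hmin_eq _ _ _ _ (by rw [h])
  have hrep_idem : ∀ j, rep (rep j) = rep j := fun j => hrep_eq _ _ (hArep j)
  set R : Finset (Fin m) := Finset.univ.image rep with hRdef
  have hRfix : ∀ r ∈ R, rep r = r := by
    intro r hr
    obtain ⟨j, _, rfl⟩ := Finset.mem_image.mp hr
    exact hrep_idem j
  have hmaps : ∀ j ∈ Finset.univ, rep j ∈ R := fun j _ =>
    Finset.mem_image_of_mem rep (Finset.mem_univ j)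
  set w : Fin m → ℂ := fun r => ∑ j ∈ Finset.univ.filter (fun j => rep j = r), (c j:ℂ) with hwdef
  have hAfiber : ∀ r, ∀ j ∈ Finset.univ.filter (fun j => rep j = r), A j = A r := by
    intro r j hj
    have h := (Finset.mem_filter.mp hj).2
    rw [← h, hArep]
  have hM2 : ∑ r ∈ R, w r • A r = 1 := by
    rw [← hM1, ← Finset.sum_fiberwise_of_maps_to hmaps (fun j => (c j:ℂ) • A j)]
    refine Finset.sum_congr rfl fun r hr => ?_
    rw [hwdef, Finset.sum_smul]
    exact Finset.sum_congr rfl fun j hj => by rw [hAfiber r j hj]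
  have hP4 : P = ∑ r ∈ R, w r • G (A r) := by
    rw [hP3, ← Finset.sum_fiberwise_of_maps_to hmaps (fun j => (c j:ℂ) • G (A j))]
    refine Finset.sum_congr rfl fun r hr => ?_
    rw [hwdef, Finset.sum_smul]
    exact Finset.sum_congr rfl fun j hj => by rw [hAfiber r j hj]
  have hgR0 : ∀ r ∈ R, ∀ t ∈ R, r ≠ t → g r t = 0 := by
    intro r hr t ht hrt
    rcases hA_or r t with h | h
    · exact h
    · exact absurd (by rw [← hRfix r hr, ← hRfix t ht]; exact hrep_eq r t h) hrt
  have hw1 : ∀ r ∈ R, w r = 1 := by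
    intro r hr
    have h := congrArg (fun M => star (φ r) ⬝ᵥ (M *ᵥ φ r)) hM2
    rw [mySum_mulVec, myDotProduct_sum, one_mulVec, hφ r] at h
    have hterm : ∀ t ∈ R, star (φ r) ⬝ᵥ ((w t • A t) *ᵥ φ r) = w t * (g t r * g r t) := by
      intro t ht
      rw [smul_mulVec, hAmulVec t r, dotProduct_smul, dotProduct_smul,
        smul_eq_mul, smul_eq_mul, show star (φ r) ⬝ᵥ φ t = g r t from rfl]
    rw [Finset.sum_congr rfl hterm] at h
    rw [Finset.sum_eq_single r] at h
    · rw [show g r r = 1 from hφ r, one_mul, mul_one] at h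
      exact h
    · intro t ht htr
      rw [hgR0 t ht r hr htr, zero_mul, mul_zero]
    · intro hrn; exact absurd hr hrn
  have htrA : ∀ r, (A r).trace = 1 := by
    intro r
    show (vecMulVec (φ r) (star (φ r))).trace = 1
    rw [myTrace_vecMulVec, ← hφ r]
    exact Finset.sum_congr rfl fun a _ => mul_comm _ _
  have hcard : R.card = d := by
    have h := congrArg Matrix.trace hM2
    rw [trace_sum, trace_one] at h
    rw [Finset.sum_congr rfl (fun r hr => by
      rw [trace_smul, htrA r, smul_eq_mul, mul_one, hw1 r hr])] at h
    rw [Finset.sum_const, nsmul_eq_mul, mul_one] at h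
    have h2 : ((R.card : ℕ) : ℂ) = ((d : ℕ) : ℂ) := by
      rw [h]; simp
    exact_mod_cast h2
  -- Step J : the basis
  have hcard' : Fintype.card {x // x ∈ R} = d := by rw [Fintype.card_coe, hcard]
  set e : Fin d ≃ {x // x ∈ R} := (Fintype.equivFinOfCardEq hcard').symm with hedef
  refine ⟨fun i => φ ((e i : Fin m)), ?_, ?_⟩
  · intro i j'
    by_cases hij : i = j'
    · subst hij; rw [if_pos rfl]; exact hφ _
    · rw [if_neg hij]
      have hne : ((e i : Fin m)) ≠ ((e j' : Fin m)) := by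
        intro hEq
        exact hij (e.injective (Subtype.ext hEq))
      exact hgR0 _ (e i).2 _ (e j').2 hne
  · rw [projCB, hP4]
    rw [Finset.sum_congr rfl (fun r hr => by rw [hw1 r hr, one_smul])]
    rw [← Finset.sum_coe_sort R (fun r => G (A r))]
    rw [← Equiv.sum_comp e (fun x => G (A (x : Fin m)))]
    refine Finset.sum_congr rfl fun i _ => ?_
    rw [hT (φ ((e i : Fin m)))]
end

section
/- Let P₁, P₂ be projectors on ℂ^d ⊗ ℂ^d, each diagonal in some product basis and each satisfying P_i ≥ |Φ⟩⟨Φ|. If (P₁−|Φ⟩⟨Φ|)(P₂−|Φ⟩⟨Φ|) = 0, then there exist mutually unbiased orthonormal bases B₁, B₂ of ℂ^d with P₁ = P(B₁) and P₂ = P(B₂). -/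
open Matrix
open scoped ComplexOrder

namespace Stmt12Aux

variable {d : ℕ}

/-- Tensor product of two vectors. -/
def kv (u v : Fin d → ℂ) : Fin d × Fin d → ℂ := fun p => u p.1 * v p.2

/-- The generic projector diagonal in a product basis. -/
noncomputable def PD (d : ℕ) (B B' : Fin d → Fin d → ℂ) (A : Fin d → Finset (Fin d)) :
    Matrix (Fin d × Fin d) (Fin d × Fin d) ℂ :=
  ∑ j, ∑ k ∈ A j, Matrix.kroneckerMap (· * ·) (Matrix.vecMulVec (B j) (star (B j)))
      (Matrix.vecMulVec (B' k) (star (B' k)))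

/-- Projection of `w` onto the span of `B' k`, `k ∈ s`. -/
noncomputable def Qv (B' : Fin d → Fin d → ℂ) (s : Finset (Fin d)) (w : Fin d → ℂ) :
    Fin d → ℂ :=
  ∑ k ∈ s, (star (B' k) ⬝ᵥ w) • B' k

/-! ### generic vector/matrix computation lemmas -/

lemma vecMulVec_mulVec' {n : Type*} [Fintype n] (a c v : n → ℂ) :
    Matrix.vecMulVec a c *ᵥ v = (c ⬝ᵥ v) • a := by
  ext p
  simp only [Matrix.mulVec, Matrix.vecMulVec_apply, dotProduct, Pi.smul_apply,
    smul_eq_mul, Finset.sum_mul]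
  exact Finset.sum_congr rfl fun q _ => by ring

lemma kv_smul_right (u : Fin d → ℂ) (c : ℂ) (v : Fin d → ℂ) :
    kv u (c • v) = c • kv u v := by
  funext p; simp [kv]; ring

lemma kv_sum_right {α : Type*} (u : Fin d → ℂ) (s : Finset α) (f : α → Fin d → ℂ) :
    kv u (∑ k ∈ s, f k) = ∑ k ∈ s, kv u (f k) := by
  funext p; simp [kv, Finset.mul_sum]

lemma kv_sub_right (u v w : Fin d → ℂ) : kv u (v - w) = kv u v - kv u w := by
  funext p; simp [kv]; ring

lemma kron_mulVec (M N : Matrix (Fin d) (Fin d) ℂ) (u v : Fin d → ℂ) :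
    Matrix.kroneckerMap (· * ·) M N *ᵥ kv u v = kv (M *ᵥ u) (N *ᵥ v) := by
  funext p
  simp only [Matrix.mulVec, dotProduct, kv, Matrix.kroneckerMap_apply,
    Fintype.sum_prod_type]
  rw [Finset.sum_mul_sum]
  exact Finset.sum_congr rfl fun q _ => Finset.sum_congr rfl fun r _ => by ring

lemma dot_kv (u v u' v' : Fin d → ℂ) :
    star (kv u v) ⬝ᵥ kv u' v' = (star u ⬝ᵥ u') * (star v ⬝ᵥ v') := by
  simp only [dotProduct, kv, Pi.star_apply, Fintype.sum_prod_type, star_mul']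
  rw [Finset.sum_mul_sum]
  exact Finset.sum_congr rfl fun q _ => Finset.sum_congr rfl fun r _ => by ring

lemma sum_mulVec' {n : Type*} [Fintype n] {α : Type*} (s : Finset α)
    (f : α → Matrix n n ℂ) (v : n → ℂ) :
    (∑ j ∈ s, f j) *ᵥ v = ∑ j ∈ s, f j *ᵥ v := by
  funext p
  rw [Finset.sum_apply]
  simp only [Matrix.mulVec, dotProduct, Matrix.sum_apply, Finset.sum_mul]
  exact Finset.sum_comm

lemma mulVec_sum' {n : Type*} [Fintype n] {α : Type*} (M : Matrix n n ℂ) (s : Finset α)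
    (f : α → n → ℂ) : M *ᵥ (∑ i ∈ s, f i) = ∑ i ∈ s, M *ᵥ f i := by
  funext p
  rw [Finset.sum_apply]
  simp only [Matrix.mulVec, dotProduct, Finset.sum_apply, Finset.mul_sum]
  exact Finset.sum_comm

lemma dot_sum_right {n : Type*} [Fintype n] {α : Type*} (u : n → ℂ) (s : Finset α)
    (f : α → n → ℂ) : u ⬝ᵥ (∑ k ∈ s, f k) = ∑ k ∈ s, u ⬝ᵥ f k := by
  simp only [dotProduct, Finset.sum_apply, Finset.mul_sum]
  exact Finset.sum_comm

lemma sum_dot_left {n : Type*} [Fintype n] {α : Type*} (s : Finset α) (f : α → n → ℂ)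
    (u : n → ℂ) : (∑ k ∈ s, f k) ⬝ᵥ u = ∑ k ∈ s, f k ⬝ᵥ u := by
  simp only [dotProduct, Finset.sum_apply, Finset.sum_mul]
  exact Finset.sum_comm

lemma star_dot (u v : Fin d → ℂ) : star (star u ⬝ᵥ v) = star v ⬝ᵥ u := by
  simp only [dotProduct, star_sum, star_mul', star_star, Pi.star_apply]
  exact Finset.sum_congr rfl fun a _ => mul_comm _ _

lemma dot_star_star (u v : Fin d → ℂ) : star (star u ⬝ᵥ star v) = v ⬝ᵥ u := by
  simp only [dotProduct, star_sum, star_mul', star_star, Pi.star_apply]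
  exact Finset.sum_congr rfl fun a _ => mul_comm _ _

lemma sqrtd_sq : ((Real.sqrt d : ℝ) : ℂ)⁻¹ * ((Real.sqrt d : ℝ) : ℂ)⁻¹ = (d : ℂ)⁻¹ := by
  rw [← mul_inv, ← Complex.ofReal_mul, Real.mul_self_sqrt (Nat.cast_nonneg d)]
  norm_num

lemma star_sqrtd : star ((Real.sqrt d : ℝ) : ℂ)⁻¹ = ((Real.sqrt d : ℝ) : ℂ)⁻¹ := by
  rw [← Complex.ofReal_inv, Complex.star_def, Complex.conj_ofReal]

lemma sqrtd_ne (hd : 0 < d) : ((Real.sqrt d : ℝ) : ℂ)⁻¹ ≠ 0 := by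
  rw [← Complex.ofReal_inv]
  rw [Ne, Complex.ofReal_eq_zero]
  positivity

/-! ### dot products with Φ -/

lemma starPhi_dot_kv (u v : Fin d → ℂ) :
    star (PhiVec d) ⬝ᵥ kv u v = ((Real.sqrt d : ℝ) : ℂ)⁻¹ * (u ⬝ᵥ v) := by
  simp only [dotProduct, kv, Pi.star_apply, PhiVec, Fintype.sum_prod_type,
    Finset.mul_sum]
  refine Finset.sum_congr rfl fun q _ => ?_
  rw [Finset.sum_eq_single q]
  · simp [Complex.conj_ofReal, ← Complex.ofReal_inv]
  · intro r _ hr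
    simp [hr, Ne.symm hr]
  · simp

lemma kv_dot_starPhi (u v : Fin d → ℂ) :
    star (kv u v) ⬝ᵥ PhiVec d = ((Real.sqrt d : ℝ) : ℂ)⁻¹ * (star u ⬝ᵥ star v) := by
  simp only [dotProduct, kv, Pi.star_apply, PhiVec, Fintype.sum_prod_type,
    Finset.mul_sum]
  refine Finset.sum_congr rfl fun q _ => ?_
  rw [Finset.sum_eq_single q]
  · simp [star_mul']; ring
  · intro r _ hr
    simp [hr, Ne.symm hr]
  · simp

lemma starPhi_dot_Phi (hd : 0 < d) :
    star (PhiVec d) ⬝ᵥ PhiVec d = 1 := by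
  simp only [dotProduct, PhiVec, Pi.star_apply, Fintype.sum_prod_type]
  have h1 : ∀ q : Fin d, ∑ r : Fin d,
      star (if q = r then ((Real.sqrt d : ℝ) : ℂ)⁻¹ else 0) *
        (if q = r then ((Real.sqrt d : ℝ) : ℂ)⁻¹ else 0) = (d : ℂ)⁻¹ := by
    intro q
    rw [Finset.sum_eq_single q]
    · rw [if_pos rfl, star_sqrtd, sqrtd_sq]
    · intro r _ hr; simp [hr, Ne.symm hr]
    · simp
  simp only [h1, Finset.sum_const, Finset.card_univ, Fintype.card_fin, nsmul_eq_mul]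
  field_simp

/-! ### orthonormal basis facts -/

lemma onb_complete {B : Fin d → Fin d → ℂ} (hB : IsONB d B) (p q : Fin d) :
    ∑ i, (starRingEnd ℂ) (B i p) * B i q = if p = q then 1 else 0 := by
  classical
  let M : Matrix (Fin d) (Fin d) ℂ := Matrix.of fun i r => B i r
  have hMM : M * Mᴴ = 1 := by
    ext i j
    have e1 : (M * Mᴴ) i j = star ((star (B i)) ⬝ᵥ (B j)) := by
      simp only [Matrix.mul_apply, Matrix.conjTranspose_apply, Matrix.of_apply,
        dotProduct, star_sum, star_mul', star_star, Pi.star_apply, M]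
      try exact Finset.sum_congr rfl fun r _ => mul_comm _ _
    rw [e1, hB i j]
    split <;> simp [Matrix.one_apply, *]
  have hMM' : Mᴴ * M = 1 := mul_eq_one_comm.mp hMM
  have h2 := congrFun (congrFun hMM' p) q
  simp only [Matrix.mul_apply, Matrix.conjTranspose_apply, Matrix.one_apply, M,
    Matrix.of_apply] at h2
  rw [← h2]
  exact Finset.sum_congr rfl fun i _ => by simp [Complex.star_def]

lemma onb_spanning {B : Fin d → Fin d → ℂ} (hB : IsONB d B) (v : Fin d → ℂ)
    (h : ∀ m, B m ⬝ᵥ v = 0) : v = 0 := by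
  funext q
  have key : (starRingEnd ℂ) (v q) = 0 := by
    have h2 : ∀ m, ∑ a, (starRingEnd ℂ) (B m a) * (starRingEnd ℂ) (v a) = 0 := by
      intro m
      have := congrArg (starRingEnd ℂ) (h m)
      simpa [dotProduct, map_sum] using this
    calc (starRingEnd ℂ) (v q) = ∑ p, (if p = q then (1:ℂ) else 0) * (starRingEnd ℂ) (v p) := by
          rw [Finset.sum_eq_single q] <;> simp_all
      _ = ∑ p, (∑ i, (starRingEnd ℂ) (B i p) * B i q) * (starRingEnd ℂ) (v p) := by
          refine Finset.sum_congr rfl fun p _ => by rw [onb_complete hB p q]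
      _ = ∑ p, ∑ i, (starRingEnd ℂ) (B i p) * B i q * (starRingEnd ℂ) (v p) := by
          exact Finset.sum_congr rfl fun p _ => Finset.sum_mul _ _ _
      _ = ∑ i, ∑ p, (starRingEnd ℂ) (B i p) * B i q * (starRingEnd ℂ) (v p) :=
          Finset.sum_comm
      _ = ∑ i, B i q * (∑ a, (starRingEnd ℂ) (B i a) * (starRingEnd ℂ) (v a)) := by
          refine Finset.sum_congr rfl fun i _ => ?_
          rw [Finset.mul_sum]
          exact Finset.sum_congr rfl fun p _ => by ring
      _ = 0 := by simp [h2]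
  simpa using congrArg (starRingEnd ℂ) key

lemma parseval {B' : Fin d → Fin d → ℂ} (hB' : IsONB d B') (v : Fin d → ℂ) :
    ∑ k, star (star (B' k) ⬝ᵥ v) * (star (B' k) ⬝ᵥ v) = star v ⬝ᵥ v := by
  classical
  let N : Matrix (Fin d) (Fin d) ℂ := Matrix.of fun k a => star (B' k a)
  have hNN : N * Nᴴ = 1 := by
    ext k k'
    have h := hB' k k'
    rw [Matrix.mul_apply, Matrix.one_apply]
    rw [show ∑ a, N k a * Nᴴ a k' = star (B' k) ⬝ᵥ B' k' from ?_, h]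
    refine Finset.sum_congr rfl fun a _ => ?_
    simp only [Matrix.conjTranspose_apply, Matrix.of_apply, star_star, N,
      dotProduct, Pi.star_apply]
  have hNN' : Nᴴ * N = 1 := mul_eq_one_comm.mp hNN
  have key : star (N *ᵥ v) ⬝ᵥ (N *ᵥ v) = star v ⬝ᵥ v := by
    rw [Matrix.star_mulVec, Matrix.dotProduct_mulVec, Matrix.vecMul_vecMul, hNN',
      Matrix.vecMul_one]
  rw [← key]
  rfl

lemma dot_self_star {B : Fin d → Fin d → ℂ} (hB : IsONB d B) (j : Fin d) :
    B j ⬝ᵥ star (B j) = 1 := by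
  have h := hB j j
  rw [if_pos rfl] at h
  calc B j ⬝ᵥ star (B j) = star (star (B j) ⬝ᵥ B j) := by
        simp only [dotProduct, star_sum, star_mul', star_star, Pi.star_apply]
    _ = 1 := by rw [h, star_one]

lemma phi_repr {B : Fin d → Fin d → ℂ} (hB : IsONB d B) :
    PhiVec d = ((Real.sqrt d : ℝ) : ℂ)⁻¹ • ∑ i, kv (B i) (star (B i)) := by
  funext p
  have h1 := congrArg (starRingEnd ℂ) (onb_complete hB p.1 p.2)
  rw [map_sum] at h1
  simp only [_root_.map_mul, Complex.conj_conj, MonoidWithZeroHom.map_ite_one_zero] at h1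
  simp only [Pi.smul_apply, Finset.sum_apply, kv, Pi.star_apply, smul_eq_mul, PhiVec]
  rw [show (∑ i, B i p.1 * star (B i p.2)) = if p.1 = p.2 then 1 else 0 from ?_]
  · split <;> simp
  · rw [← h1]
    exact Finset.sum_congr rfl fun i _ => by rw [Complex.star_def, mul_comm]

/-! ### Hermitian facts -/

lemma PD_herm (B B' : Fin d → Fin d → ℂ) (A : Fin d → Finset (Fin d)) :
    (PD d B B' A).IsHermitian := by
  rw [Matrix.IsHermitian]
  ext p q
  simp only [PD, Matrix.conjTranspose_apply, Matrix.sum_apply, star_sum,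
    Matrix.kroneckerMap_apply, Matrix.vecMulVec_apply, Pi.star_apply, star_mul', star_star]
  refine Finset.sum_congr rfl fun j _ => Finset.sum_congr rfl fun k _ => by ring

lemma Phi_herm : (PhiMat d).IsHermitian := by
  rw [Matrix.IsHermitian]
  ext p q
  simp only [PhiMat, Matrix.conjTranspose_apply, Matrix.vecMulVec_apply, Pi.star_apply,
    star_mul', star_star]
  ring

lemma PhiMat_mulVec (x : Fin d × Fin d → ℂ) :
    PhiMat d *ᵥ x = (star (PhiVec d) ⬝ᵥ x) • PhiVec d := by
  unfold PhiMat
  exact vecMulVec_mulVec' _ _ _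

/-! ### mulVec of PD on product vectors -/

lemma PD_mulVec_kv (B B' : Fin d → Fin d → ℂ) (A : Fin d → Finset (Fin d))
    (a w : Fin d → ℂ) :
    PD d B B' A *ᵥ kv a w = ∑ j, (star (B j) ⬝ᵥ a) • kv (B j) (Qv B' (A j) w) := by
  rw [PD, sum_mulVec']
  refine Finset.sum_congr rfl fun j _ => ?_
  rw [sum_mulVec', Qv, kv_sum_right]
  rw [Finset.smul_sum]
  refine Finset.sum_congr rfl fun k _ => ?_
  rw [kron_mulVec, vecMulVec_mulVec', vecMulVec_mulVec', kv_smul_right]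
  funext p
  simp [kv]
  ring

lemma PD_mulVec_kv_onb {B : Fin d → Fin d → ℂ} (B' : Fin d → Fin d → ℂ) (hB : IsONB d B)
    (A : Fin d → Finset (Fin d)) (j : Fin d) (w : Fin d → ℂ) :
    PD d B B' A *ᵥ kv (B j) w = kv (B j) (Qv B' (A j) w) := by
  rw [PD_mulVec_kv, Finset.sum_eq_single j]
  · rw [hB j j, if_pos rfl, one_smul]
  · intro i _ hij; rw [hB i j, if_neg hij, zero_smul]
  · simp

/-! ### Qv facts -/

lemma dot_Bk_Qv {B' : Fin d → Fin d → ℂ} (hB' : IsONB d B') {s : Finset (Fin d)}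
    {k : Fin d} (hk : k ∈ s) (w : Fin d → ℂ) :
    star (B' k) ⬝ᵥ Qv B' s w = star (B' k) ⬝ᵥ w := by
  rw [Qv, dot_sum_right, Finset.sum_eq_single k]
  · rw [dotProduct_smul, hB' k k, if_pos rfl, smul_eq_mul, mul_one]
  · intro b hb hbk
    rw [dotProduct_smul, hB' k b, if_neg (Ne.symm hbk), smul_zero]
  · intro hk'; exact absurd hk hk'

lemma Qv_self {B' : Fin d → Fin d → ℂ} (hB' : IsONB d B') (s : Finset (Fin d))
    (w : Fin d → ℂ) : Qv B' s (Qv B' s w) = Qv B' s w := by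
  rw [Qv]
  conv_rhs => rw [Qv]
  refine Finset.sum_congr rfl fun k hk => ?_
  rw [dot_Bk_Qv hB' hk]

lemma Qv_smul (B' : Fin d → Fin d → ℂ) (s : Finset (Fin d)) (c : ℂ) (w : Fin d → ℂ) :
    Qv B' s (c • w) = c • Qv B' s w := by
  rw [Qv, Qv, Finset.smul_sum]
  refine Finset.sum_congr rfl fun k _ => ?_
  rw [dotProduct_smul, smul_eq_mul, mul_smul]

lemma Qv_sub (B' : Fin d → Fin d → ℂ) (s : Finset (Fin d)) (v w : Fin d → ℂ) :
    Qv B' s (v - w) = Qv B' s v - Qv B' s w := by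
  rw [Qv, Qv, Qv, ← Finset.sum_sub_distrib]
  refine Finset.sum_congr rfl fun k _ => ?_
  rw [dotProduct_sub, sub_smul]

lemma star_Qv_dot {B' : Fin d → Fin d → ℂ} (hB' : IsONB d B') (s : Finset (Fin d))
    (x w : Fin d → ℂ) :
    star (Qv B' s x) ⬝ᵥ Qv B' s w = star (Qv B' s x) ⬝ᵥ w := by
  have expand : ∀ u : Fin d → ℂ, star (Qv B' s x) ⬝ᵥ u
      = ∑ k ∈ s, star (star (B' k) ⬝ᵥ x) * (star (B' k) ⬝ᵥ u) := by
    intro u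
    rw [Qv]
    rw [show (star (∑ k ∈ s, (star (B' k) ⬝ᵥ x) • B' k))
      = ∑ k ∈ s, star (star (B' k) ⬝ᵥ x) • star (B' k) from ?_]
    · rw [sum_dot_left]
      exact Finset.sum_congr rfl fun k _ => smul_dotProduct _ _ _
    · rw [star_sum]
      exact Finset.sum_congr rfl fun k _ => by rw [star_smul]
  rw [expand, expand]
  refine Finset.sum_congr rfl fun k hk => ?_
  rw [dot_Bk_Qv hB' hk]

lemma dot_Qv_of_fix {B' : Fin d → Fin d → ℂ} (hB' : IsONB d B') {s : Finset (Fin d)}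
    {e : Fin d → ℂ} (hfix : Qv B' s (star e) = star e) (w : Fin d → ℂ) :
    e ⬝ᵥ Qv B' s w = e ⬝ᵥ w := by
  have h1 : e ⬝ᵥ Qv B' s w = star (Qv B' s (star e)) ⬝ᵥ Qv B' s w := by
    rw [hfix, star_star]
  rw [h1, star_Qv_dot hB', hfix, star_star]

/-! ### the fixed-point property: P ≥ |Φ⟩⟨Φ| forces Q_j ψ_j* = ψ_j* -/

lemma PD_fixes_Phi (hd : 0 < d) {B B' : Fin d → Fin d → ℂ} (hB : IsONB d B)
    (hB' : IsONB d B') (A : Fin d → Finset (Fin d))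
    (hge : (PD d B B' A - PhiMat d).PosSemidef) (j : Fin d) :
    Qv B' (A j) (star (B j)) = star (B j) := by
  classical
  set c : ℂ := ((Real.sqrt d : ℝ) : ℂ)⁻¹ with hc
  -- action of PD on Φ
  have hPDPhi : PD d B B' A *ᵥ PhiVec d
      = c • ∑ i, kv (B i) (Qv B' (A i) (star (B i))) := by
    rw [phi_repr hB, Matrix.mulVec_smul, mulVec_sum']
    congr 1
    exact Finset.sum_congr rfl fun i _ => PD_mulVec_kv_onb B' hB A i (star (B i))
  -- the quadratic form at Φ
  have hz : star (PhiVec d) ⬝ᵥ (PD d B B' A *ᵥ PhiVec d)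
      = (d:ℂ)⁻¹ * ∑ i, B i ⬝ᵥ Qv B' (A i) (star (B i)) := by
    rw [hPDPhi, dotProduct_smul, dot_sum_right]
    rw [show (∑ i, star (PhiVec d) ⬝ᵥ kv (B i) (Qv B' (A i) (star (B i))))
        = ∑ i, c * (B i ⬝ᵥ Qv B' (A i) (star (B i))) from
      Finset.sum_congr rfl fun i _ => starPhi_dot_kv _ _]
    rw [← Finset.mul_sum, smul_eq_mul, ← mul_assoc, ← sqrtd_sq]
  -- each summand
  have hterm : ∀ i, B i ⬝ᵥ Qv B' (A i) (star (B i))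
      = ∑ k ∈ A i, star (star (B' k) ⬝ᵥ star (B i)) * (star (B' k) ⬝ᵥ star (B i)) := by
    intro i
    rw [Qv, dot_sum_right]
    refine Finset.sum_congr rfl fun k _ => ?_
    rw [dotProduct_smul, smul_eq_mul, ← dot_star_star (B' k) (B i)]
    ring
  -- upper bound
  have hbound : ∀ i, B i ⬝ᵥ Qv B' (A i) (star (B i)) ≤ 1 := by
    intro i
    rw [hterm i]
    have hsub : ∑ k ∈ A i, star (star (B' k) ⬝ᵥ star (B i)) * (star (B' k) ⬝ᵥ star (B i))
        ≤ ∑ k, star (star (B' k) ⬝ᵥ star (B i)) * (star (B' k) ⬝ᵥ star (B i)) :=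
      Finset.sum_le_sum_of_subset_of_nonneg (Finset.subset_univ _)
        (fun k _ _ => star_mul_self_nonneg _)
    have hpar : ∑ k, star (star (B' k) ⬝ᵥ star (B i)) * (star (B' k) ⬝ᵥ star (B i))
        = 1 := by
      rw [parseval hB' (star (B i)), star_star, dot_self_star hB i]
    rw [← hpar]
    exact hsub
  have hnonneg : ∀ i, (0:ℂ) ≤ B i ⬝ᵥ Qv B' (A i) (star (B i)) := by
    intro i
    rw [hterm i]
    exact Finset.sum_nonneg fun k _ => star_mul_self_nonneg _
  have hdinv_nonneg : (0:ℂ) ≤ (d:ℂ)⁻¹ := by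
    rw [show ((d:ℂ))⁻¹ = (((d:ℝ)⁻¹ : ℝ) : ℂ) by push_cast; ring, Complex.zero_le_real]
    positivity
  have hzle : star (PhiVec d) ⬝ᵥ (PD d B B' A *ᵥ PhiVec d) ≤ 1 := by
    rw [hz]
    calc (d:ℂ)⁻¹ * ∑ i, B i ⬝ᵥ Qv B' (A i) (star (B i))
        ≤ (d:ℂ)⁻¹ * ∑ _i : Fin d, (1:ℂ) :=
          mul_le_mul_of_nonneg_left (Finset.sum_le_sum fun i _ => hbound i) hdinv_nonneg
      _ = 1 := by
          simp only [Finset.sum_const, Finset.card_univ, Fintype.card_fin, nsmul_eq_mul,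
            mul_one]
          rw [inv_mul_cancel₀ (by exact_mod_cast hd.ne' : (d:ℂ) ≠ 0)]
  -- the quadratic form of PD - Φ at Φ is both ≥ 0 and ≤ 0
  have hPhiPhi : PhiMat d *ᵥ PhiVec d = PhiVec d := by
    rw [PhiMat_mulVec, starPhi_dot_Phi hd, one_smul]
  have hqf : star (PhiVec d) ⬝ᵥ ((PD d B B' A - PhiMat d) *ᵥ PhiVec d) = 0 := by
    refine le_antisymm ?_ (hge.dotProduct_mulVec_nonneg (PhiVec d))
    rw [Matrix.sub_mulVec, dotProduct_sub, hPhiPhi, starPhi_dot_Phi hd]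
    exact sub_nonpos.mpr hzle
  have hkill : (PD d B B' A - PhiMat d) *ᵥ PhiVec d = 0 :=
    (hge.dotProduct_mulVec_zero_iff (PhiVec d)).mp hqf
  -- so PD fixes Φ
  have hfix : PD d B B' A *ᵥ PhiVec d = PhiVec d := by
    have := hkill
    rw [Matrix.sub_mulVec, sub_eq_zero] at this
    rw [this, hPhiPhi]
  -- extract the j-th component
  have hsum : ∑ i, kv (B i) (Qv B' (A i) (star (B i)) - star (B i)) = 0 := by
    have h1 : c • ∑ i, kv (B i) (Qv B' (A i) (star (B i)))
        = c • ∑ i, kv (B i) (star (B i)) := by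
      rw [← hPDPhi, hfix, phi_repr hB]
    have h2 := smul_right_injective _ (sqrtd_ne hd) h1
    rw [show (∑ i, kv (B i) (Qv B' (A i) (star (B i)) - star (B i)))
        = (∑ i, kv (B i) (Qv B' (A i) (star (B i)))) - ∑ i, kv (B i) (star (B i)) from ?_]
    · rw [h2, sub_self]
    · rw [← Finset.sum_sub_distrib]
      exact Finset.sum_congr rfl fun i _ => kv_sub_right _ _ _
  set u : Fin d → Fin d → ℂ := fun i => Qv B' (A i) (star (B i)) - star (B i) with hu
  have hdot := congrArg (fun w => star (kv (B j) (u j)) ⬝ᵥ w) hsum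
  simp only [dotProduct_zero] at hdot
  rw [dot_sum_right, Finset.sum_eq_single j] at hdot
  · rw [dot_kv, hB j j, if_pos rfl, one_mul] at hdot
    have h3 : u j = 0 := (dotProduct_star_self_eq_zero).mp hdot
    have h4 : Qv B' (A j) (star (B j)) - star (B j) = 0 := h3
    rw [sub_eq_zero] at h4
    exact h4
  · intro i _ hij
    rw [dot_kv, hB j i, if_neg (Ne.symm hij), zero_mul]
  · simp

/-! ### mutual unbiasedness -/

lemma mub_of_orth (hd : 0 < d) {B1 B1' B2 B2' : Fin d → Fin d → ℂ}
    (hB1 : IsONB d B1) (hB2 : IsONB d B2)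
    {A1 A2 : Fin d → Finset (Fin d)}
    (hfix1 : ∀ j, Qv B1' (A1 j) (star (B1 j)) = star (B1 j))
    (hfix2 : ∀ j, Qv B2' (A2 j) (star (B2 j)) = star (B2 j))
    (horth : (PD d B1 B1' A1 - PhiMat d) * (PD d B2 B2' A2 - PhiMat d) = 0)
    (i j : Fin d) :
    (star (B1 i) ⬝ᵥ B2 j) * star (star (B1 i) ⬝ᵥ B2 j) = (d:ℂ)⁻¹ := by
  classical
  set c : ℂ := ((Real.sqrt d : ℝ) : ℂ)⁻¹ with hc
  set X := kv (B1 i) (star (B1 i)) with hXdef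
  set Y := kv (B2 j) (star (B2 j)) with hYdef
  have hX : (PD d B1 B1' A1 - PhiMat d) *ᵥ X = X - c • PhiVec d := by
    rw [Matrix.sub_mulVec, hXdef, PD_mulVec_kv_onb B1' hB1 A1 i, hfix1 i, PhiMat_mulVec,
      starPhi_dot_kv, dot_self_star hB1 i, mul_one]
  have hY : (PD d B2 B2' A2 - PhiMat d) *ᵥ Y = Y - c • PhiVec d := by
    rw [Matrix.sub_mulVec, hYdef, PD_mulVec_kv_onb B2' hB2 A2 j, hfix2 j, PhiMat_mulVec,
      starPhi_dot_kv, dot_self_star hB2 j, mul_one]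
  have hherm : (PD d B1 B1' A1 - PhiMat d).IsHermitian :=
    (PD_herm B1 B1' A1).sub Phi_herm
  have h0 : star X ⬝ᵥ (((PD d B1 B1' A1 - PhiMat d) * (PD d B2 B2' A2 - PhiMat d)) *ᵥ Y)
      = 0 := by
    rw [horth, Matrix.zero_mulVec, dotProduct_zero]
  have h1 : star X ⬝ᵥ (((PD d B1 B1' A1 - PhiMat d) * (PD d B2 B2' A2 - PhiMat d)) *ᵥ Y)
      = star ((PD d B1 B1' A1 - PhiMat d) *ᵥ X) ⬝ᵥ ((PD d B2 B2' A2 - PhiMat d) *ᵥ Y) := by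
    rw [← Matrix.mulVec_mulVec, Matrix.dotProduct_mulVec, Matrix.star_mulVec, hherm.eq]
  have h2 : star ((PD d B1 B1' A1 - PhiMat d) *ᵥ X) ⬝ᵥ ((PD d B2 B2' A2 - PhiMat d) *ᵥ Y)
      = (star (B1 i) ⬝ᵥ B2 j) * star (star (B1 i) ⬝ᵥ B2 j) - (d:ℂ)⁻¹ := by
    rw [hX, hY]
    rw [star_sub, star_smul, star_sqrtd, sub_dotProduct, dotProduct_sub,
      dotProduct_sub, smul_dotProduct, smul_dotProduct,
      dotProduct_smul, dotProduct_smul]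
    have e1 : star X ⬝ᵥ Y = (star (B1 i) ⬝ᵥ B2 j) * star (star (B1 i) ⬝ᵥ B2 j) := by
      rw [hXdef, hYdef, dot_kv, star_star]
      congr 1
      rw [star_dot, dotProduct_comm]
    have e2 : star X ⬝ᵥ PhiVec d = c := by
      rw [hXdef, kv_dot_starPhi, star_star]
      have := hB1 i i
      rw [if_pos rfl] at this
      rw [this, mul_one]
    have e3 : star (PhiVec d) ⬝ᵥ Y = c := by
      rw [hYdef, starPhi_dot_kv, dot_self_star hB2 j, mul_one]
    have e4 : star (PhiVec d) ⬝ᵥ PhiVec d = 1 := starPhi_dot_Phi hd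
    rw [e1, e2, e3, e4, smul_eq_mul, smul_eq_mul, smul_eq_mul, mul_one, ← sqrtd_sq]
    ring
  rw [h1, h2, sub_eq_zero] at h0
  exact h0

/-! ### collapsing PD to the CB projector -/

lemma kron_sum_right {α : Type*} (M : Matrix (Fin d) (Fin d) ℂ) (s : Finset α)
    (N : α → Matrix (Fin d) (Fin d) ℂ) :
    Matrix.kroneckerMap (· * ·) M (∑ k ∈ s, N k)
      = ∑ k ∈ s, Matrix.kroneckerMap (· * ·) M (N k) := by
  ext p q
  simp [Matrix.kroneckerMap_apply, Matrix.sum_apply, Finset.mul_sum]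

lemma eq_of_mulVec_eq {n : Type*} [Fintype n] [DecidableEq n] {M N : Matrix n n ℂ}
    (h : ∀ v, M *ᵥ v = N *ᵥ v) : M = N := by
  ext p q
  have := congrFun (h (Pi.single q 1)) p
  simpa [Matrix.mulVec_single] using this

lemma collapse (hd : 0 < d) {B B' C C' : Fin d → Fin d → ℂ}
    (hB : IsONB d B) (hB' : IsONB d B') (hC : IsONB d C) (hC' : IsONB d C')
    {A A' : Fin d → Finset (Fin d)}
    (hfixB : ∀ j, Qv B' (A j) (star (B j)) = star (B j))
    (hfixC : ∀ j, Qv C' (A' j) (star (C j)) = star (C j))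
    (horth : (PD d C C' A' - PhiMat d) * (PD d B B' A - PhiMat d) = 0)
    (hmub : ∀ m j, star (C m) ⬝ᵥ B j ≠ 0) :
    PD d B B' A = projCB d B := by
  classical
  suffices h : ∀ j, (∑ k ∈ A j, Matrix.vecMulVec (B' k) (star (B' k)))
      = Matrix.vecMulVec (star (B j)) (B j) by
    rw [PD, projCB]
    refine Finset.sum_congr rfl fun j _ => ?_
    rw [← kron_sum_right, h j]
  intro j
  refine eq_of_mulVec_eq fun v => ?_
  rw [sum_mulVec', vecMulVec_mulVec']
  rw [show (∑ k ∈ A j, Matrix.vecMulVec (B' k) (star (B' k)) *ᵥ v) = Qv B' (A j) v from ?_]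
  swap
  · rw [Qv]
    exact Finset.sum_congr rfl fun k _ => vecMulVec_mulVec' _ _ _
  set χ : Fin d → ℂ := Qv B' (A j) v - (B j ⬝ᵥ v) • star (B j) with hχdef
  rw [← sub_eq_zero, ← hχdef]
  -- χ is fixed by Q_j
  have hχQ : Qv B' (A j) χ = χ := by
    rw [hχdef, Qv_sub, Qv_self hB', Qv_smul, hfixB j]
  -- χ ⊥ ψ_j*
  have hχdot : B j ⬝ᵥ χ = 0 := by
    rw [hχdef, dotProduct_sub, dot_Qv_of_fix hB' (hfixB j),
      dotProduct_smul, dot_self_star hB j, smul_eq_mul, mul_one, sub_self]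
  -- (PD_B - Φ) fixes e_j ⊗ χ
  have h1 : (PD d B B' A - PhiMat d) *ᵥ kv (B j) χ = kv (B j) χ := by
    rw [Matrix.sub_mulVec, PD_mulVec_kv_onb B' hB A j, hχQ, PhiMat_mulVec,
      starPhi_dot_kv, hχdot, mul_zero, zero_smul, sub_zero]
  -- so (PD_C - Φ) kills it
  have h2 : (PD d C C' A' - PhiMat d) *ᵥ kv (B j) χ = 0 := by
    calc (PD d C C' A' - PhiMat d) *ᵥ kv (B j) χ
        = (PD d C C' A' - PhiMat d) *ᵥ ((PD d B B' A - PhiMat d) *ᵥ kv (B j) χ) := by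
          rw [h1]
      _ = ((PD d C C' A' - PhiMat d) * (PD d B B' A - PhiMat d)) *ᵥ kv (B j) χ :=
          Matrix.mulVec_mulVec _ _ _
      _ = 0 := by rw [horth, Matrix.zero_mulVec]
  have h3 : PD d C C' A' *ᵥ kv (B j) χ = 0 := by
    have h4 : PhiMat d *ᵥ kv (B j) χ = 0 := by
      rw [PhiMat_mulVec, starPhi_dot_kv, hχdot, mul_zero, zero_smul]
    rw [Matrix.sub_mulVec, h4, sub_zero] at h2
    exact h2
  -- project onto g_m ⊗ g_m* to conclude χ ⊥ all g_m
  have h5 : ∀ m, C m ⬝ᵥ χ = 0 := by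
    intro m
    have h6 := congrArg (fun w => star (kv (C m) (star (C m))) ⬝ᵥ w) h3
    simp only [dotProduct_zero] at h6
    rw [PD_mulVec_kv, dot_sum_right, Finset.sum_eq_single m] at h6
    · rw [dotProduct_smul, dot_kv, hC m m, if_pos rfl, one_mul, star_star,
        dot_Qv_of_fix hC' (hfixC m), smul_eq_mul] at h6
      exact (mul_eq_zero.mp h6).resolve_left (hmub m j)
    · intro m' _ hm'
      rw [dotProduct_smul, dot_kv, hC m m', if_neg (Ne.symm hm'), zero_mul,
        smul_zero]
    · simp
  exact onb_spanning hC χ h5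

end Stmt12Aux

/-- two projectors diagonal in product bases, each ≥ |Φ⟩⟨Φ|, whose reduced
parts are orthogonal, are CB projectors of two mutually unbiased bases. -/
theorem stmt12 {d : ℕ} (hd : 0 < d)
    (P1 P2 : Matrix (Fin d × Fin d) (Fin d × Fin d) ℂ)
    (B1 B1' B2 B2' : Fin d → Fin d → ℂ)
    (hB1 : IsONB d B1) (hB1' : IsONB d B1') (hB2 : IsONB d B2) (hB2' : IsONB d B2')
    (A1 A2 : Fin d → Finset (Fin d))
    (hP1 : P1 = ∑ j, ∑ k ∈ A1 j,
        Matrix.kroneckerMap (· * ·) (Matrix.vecMulVec (B1 j) (star (B1 j)))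
          (Matrix.vecMulVec (B1' k) (star (B1' k))))
    (hP2 : P2 = ∑ j, ∑ k ∈ A2 j,
        Matrix.kroneckerMap (· * ·) (Matrix.vecMulVec (B2 j) (star (B2 j)))
          (Matrix.vecMulVec (B2' k) (star (B2' k))))
    (hge1 : (P1 - PhiMat d).PosSemidef) (hge2 : (P2 - PhiMat d).PosSemidef)
    (horth : (P1 - PhiMat d) * (P2 - PhiMat d) = 0) :
    ∃ C1 C2 : Fin d → Fin d → ℂ, IsONB d C1 ∧ IsONB d C2 ∧
      (∀ i j, ‖star (C1 i) ⬝ᵥ C2 j‖ ^ 2 = 1 / (d : ℝ)) ∧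
      P1 = projCB d C1 ∧ P2 = projCB d C2 := by
  classical
  open Stmt12Aux in
  have hP1' : P1 = PD d B1 B1' A1 := hP1
  have hP2' : P2 = PD d B2 B2' A2 := hP2
  have hge1' : (PD d B1 B1' A1 - PhiMat d).PosSemidef := hP1' ▸ hge1
  have hge2' : (PD d B2 B2' A2 - PhiMat d).PosSemidef := hP2' ▸ hge2
  have horthPD : (PD d B1 B1' A1 - PhiMat d) * (PD d B2 B2' A2 - PhiMat d) = 0 := by
    rw [← hP1', ← hP2']; exact horth
  have hfix1 : ∀ j, Qv B1' (A1 j) (star (B1 j)) = star (B1 j) :=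
    fun j => PD_fixes_Phi hd hB1 hB1' A1 hge1' j
  have hfix2 : ∀ j, Qv B2' (A2 j) (star (B2 j)) = star (B2 j) :=
    fun j => PD_fixes_Phi hd hB2 hB2' A2 hge2' j
  have hmubC : ∀ i j, (star (B1 i) ⬝ᵥ B2 j) * star (star (B1 i) ⬝ᵥ B2 j) = (d:ℂ)⁻¹ :=
    mub_of_orth hd hB1 hB2 hfix1 hfix2 horthPD
  have hdC : (d:ℂ)⁻¹ ≠ 0 := inv_ne_zero (by exact_mod_cast hd.ne')
  have hz_ne : ∀ i j, star (B1 i) ⬝ᵥ B2 j ≠ 0 := by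
    intro i j h
    have := hmubC i j
    rw [h, zero_mul] at this
    exact hdC this.symm
  have horthPD' : (PD d B2 B2' A2 - PhiMat d) * (PD d B1 B1' A1 - PhiMat d) = 0 := by
    have h := congrArg Matrix.conjTranspose horthPD
    rw [Matrix.conjTranspose_mul, ((PD_herm B1 B1' A1).sub Phi_herm).eq,
      ((PD_herm B2 B2' A2).sub Phi_herm).eq, Matrix.conjTranspose_zero] at h
    exact h
  have hcol1 : PD d B1 B1' A1 = projCB d B1 :=
    collapse hd hB1 hB1' hB2 hB2' hfix1 hfix2 horthPD'
      (fun m j => by rw [← star_dot]; exact star_ne_zero.mpr (hz_ne j m))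
  have hcol2 : PD d B2 B2' A2 = projCB d B2 :=
    collapse hd hB2 hB2' hB1 hB1' hfix2 hfix1 horthPD (fun m j => hz_ne m j)
  refine ⟨B1, B2, hB1, hB2, ?_, hP1'.trans hcol1, hP2'.trans hcol2⟩
  intro i j
  have h := hmubC i j
  rw [Complex.star_def, Complex.mul_conj] at h
  have h2 : ((Complex.normSq (star (B1 i) ⬝ᵥ B2 j) : ℝ) : ℂ) = (((d:ℝ)⁻¹ : ℝ) : ℂ) := by
    rw [h]; push_cast; ring
  have h3 := Complex.ofReal_inj.mp h2
  rw [Complex.sq_norm, h3, one_div]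
end
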